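/- arXiv:1706.07833 — 3 statements merged into one kernel-verified Lean document; each statement's English description precedes it below -/
import Mathlib

section
/- Let x* be a local minimizer of (NLP) such that MFCQ holds at x* and the rank of the Jacobian matrix J(x*) ∈ ℝ^{(m+q)×n} is n−1, where q is the number of active inequality constraints at x*. Then there exists a Lagrange multiplier (λ,μ) ∈ Λ(x*) such that dᵀ∇²ₓₓL(x*,λ,μ)d ≥ 0 for all d ∈ S(x*) (WSOC holds at x*). -/
open scoped BigOperators Pointwise
open Matrix

attribute [local instance] Classical.propDecidable

noncomputable section

/-- The gradient vector of `φ` at `x` (the vector of partial derivatives). -/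
def gradVec {n : ℕ} (φ : (Fin n → ℝ) → ℝ) (x : Fin n → ℝ) : Fin n → ℝ :=
  fun k => fderiv ℝ φ x (Pi.single k 1)

/-- The quadratic form `d ↦ dᵀ ∇²φ(x) d` of the Hessian of `φ` at `x`. -/
def hessQ {n : ℕ} (φ : (Fin n → ℝ) → ℝ) (x d : Fin n → ℝ) : ℝ :=
  iteratedFDeriv ℝ 2 φ x ![d, d]

/-- Feasibility for the problem (NLP). -/
def Feas {n m p : ℕ} (h : Fin m → (Fin n → ℝ) → ℝ) (g : Fin p → (Fin n → ℝ) → ℝ)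
    (x : Fin n → ℝ) : Prop :=
  (∀ i, h i x = 0) ∧ ∀ j, g j x ≤ 0

/-- The Lagrangian of (NLP). -/
def Lagr {n m p : ℕ} (f : (Fin n → ℝ) → ℝ) (h : Fin m → (Fin n → ℝ) → ℝ)
    (g : Fin p → (Fin n → ℝ) → ℝ) (lam : Fin m → ℝ) (mu : Fin p → ℝ) (x : Fin n → ℝ) : ℝ :=
  f x + ∑ i, lam i * h i x + ∑ j, mu j * g j x

/-- `(lam, mu)` is a Lagrange multiplier at `xs`, i.e. `(lam, mu) ∈ Λ(xs)`. -/
def IsLagMult {n m p : ℕ} (f : (Fin n → ℝ) → ℝ) (h : Fin m → (Fin n → ℝ) → ℝ)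
    (g : Fin p → (Fin n → ℝ) → ℝ) (xs : Fin n → ℝ) (lam : Fin m → ℝ) (mu : Fin p → ℝ) : Prop :=
  (∀ j, 0 ≤ mu j) ∧ fderiv ℝ (Lagr f h g lam mu) xs = 0 ∧ ∀ j, mu j * g j xs = 0

/-- The Mangasarian-Fromovitz constraint qualification at `xs`. -/
def MFCQ {n m p : ℕ} (h : Fin m → (Fin n → ℝ) → ℝ) (g : Fin p → (Fin n → ℝ) → ℝ)
    (xs : Fin n → ℝ) : Prop :=
  LinearIndependent ℝ (fun i : Fin m => fderiv ℝ (h i) xs) ∧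
  ∃ d : Fin n → ℝ, (∀ i, fderiv ℝ (h i) xs d = 0) ∧
    ∀ j, g j xs = 0 → fderiv ℝ (g j) xs d < 0

/-- Membership in the critical cone `C(xs)`. -/
def critCone {n m p : ℕ} (f : (Fin n → ℝ) → ℝ) (h : Fin m → (Fin n → ℝ) → ℝ)
    (g : Fin p → (Fin n → ℝ) → ℝ) (xs d : Fin n → ℝ) : Prop :=
  fderiv ℝ f xs d = 0 ∧ (∀ i, fderiv ℝ (h i) xs d = 0) ∧
    ∀ j, g j xs = 0 → fderiv ℝ (g j) xs d ≤ 0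

/-- Membership in the critical subspace `S(xs)`. -/
def critSub {n m p : ℕ} (h : Fin m → (Fin n → ℝ) → ℝ) (g : Fin p → (Fin n → ℝ) → ℝ)
    (xs d : Fin n → ℝ) : Prop :=
  (∀ i, fderiv ℝ (h i) xs d = 0) ∧ ∀ j, g j xs = 0 → fderiv ℝ (g j) xs d = 0

/-- The Jacobian matrix `J(x)` of equality and active inequality constraints
(activity taken at the base point `xs`). -/
def Jac {n m p : ℕ} (h : Fin m → (Fin n → ℝ) → ℝ) (g : Fin p → (Fin n → ℝ) → ℝ)
    (xs x : Fin n → ℝ) : Matrix (Fin m ⊕ {j : Fin p // g j xs = 0}) (Fin n) ℝ :=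
  Matrix.of fun i k =>
    Sum.elim (fun i' => fderiv ℝ (h i') x (Pi.single k 1))
      (fun j' => fderiv ℝ (g j'.1) x (Pi.single k 1)) i

/-- A first-order cone: the (direct) sum of a linear subspace and a ray. -/
def IsFirstOrderCone {n : ℕ} (K : Set (Fin n → ℝ)) : Prop :=
  ∃ (W : Submodule ℝ (Fin n → ℝ)) (d0 : Fin n → ℝ),
    K = {x | ∃ w ∈ W, ∃ r : ℝ, 0 ≤ r ∧ x = w + r • d0}

/-- The rank of a family of vectors: the dimension of its linear span. -/
def famRank {ι : Type*} {n : ℕ} (v : ι → (Fin n → ℝ)) : ℕ :=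
  Module.finrank ℝ (Submodule.span ℝ (Set.range v))


open Finset Filter Set Topology




variable {κ ι : Type*} [Fintype κ] [Fintype ι]

/-- Conic Carathéodory reduction step. -/
lemma cara_aux (v : ι → κ → ℝ) :
    ∀ (N : ℕ) (t : ι → ℝ), ((univ.filter (fun i => t i ≠ 0)).card ≤ N) → (∀ i, 0 ≤ t i) →
    ∃ (s : Finset ι) (t' : ι → ℝ), LinearIndependent ℝ (fun i : s => v i) ∧
      (∀ i, 0 ≤ t' i) ∧ (∀ i ∉ s, t' i = 0) ∧ ∑ i, t' i • v i = ∑ i, t i • v i := by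
  intro N
  induction N with
  | zero =>
      intro t hcard ht
      have hsupp : ∀ i, t i = 0 := by
        intro i
        by_contra hi
        have : i ∈ univ.filter (fun i => t i ≠ 0) := by simp [hi]
        have := Finset.card_pos.mpr ⟨i, this⟩
        omega
      refine ⟨∅, t, ?_, ht, fun i _ => hsupp i, rfl⟩
      exact linearIndependent_empty_type
  | succ N ih =>
      intro t hcard ht
      set supp := univ.filter (fun i => t i ≠ 0) with hsuppdef
      by_cases hLI : LinearIndependent ℝ (fun i : supp => v i)
      · refine ⟨supp, t, hLI, ht, ?_, rfl⟩
        intro i hi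
        by_contra h0
        exact hi (by simp [hsuppdef, h0])
      · -- get a nontrivial relation supported on supp
        rw [Fintype.not_linearIndependent_iff] at hLI
        obtain ⟨c, hcsum, i₁, hi₁⟩ := hLI
        -- extend c to ι
        set cc0 : ι → ℝ := fun i => if hi : i ∈ supp then c ⟨i, hi⟩ else 0 with hcc0
        have hcc0sum : ∑ i, cc0 i • v i = 0 := by
          rw [← Finset.sum_subset (Finset.subset_univ supp)]
          · rw [← Finset.sum_attach supp (fun i => cc0 i • v i)]
            rw [← hcsum]
            apply Finset.sum_congr rfl
            intro i _
            simp [hcc0, i.2]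
          · intro i _ hi
            simp [hcc0, hi]
        have hcc0supp : ∀ i ∉ supp, cc0 i = 0 := fun i hi => by simp [hcc0, hi]
        have hcc0ne : cc0 (i₁ : ι) ≠ 0 := by simpa [hcc0, i₁.2] using hi₁
        -- wlog there is a positive entry
        obtain ⟨cc, hccsum, hccsupp, j₁, hj₁⟩ :
            ∃ cc : ι → ℝ, ∑ i, cc i • v i = 0 ∧ (∀ i ∉ supp, cc i = 0) ∧ ∃ j, 0 < cc j := by
          rcases lt_or_gt_of_ne hcc0ne with hneg | hpos
          · exact ⟨-cc0, by simp [hcc0sum], fun i hi => by simp [hcc0supp i hi],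
              ⟨i₁, by simpa using hneg⟩⟩
          · exact ⟨cc0, hcc0sum, hcc0supp, ⟨i₁, hpos⟩⟩
        set P := univ.filter (fun i => 0 < cc i) with hPdef
        have hPne : P.Nonempty := ⟨j₁, by simp [hPdef, hj₁]⟩
        obtain ⟨i₀, hi₀P, hi₀min⟩ := Finset.exists_min_image P (fun i => t i / cc i) hPne
        have hcci₀ : 0 < cc i₀ := by simpa [hPdef] using hi₀P
        set τ := t i₀ / cc i₀ with hτdef
        have hτ : 0 ≤ τ := div_nonneg (ht i₀) hcci₀.le
        set t' : ι → ℝ := fun i => t i - τ * cc i with ht'def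
        have ht' : ∀ i, 0 ≤ t' i := by
          intro i
          rcases le_or_gt (cc i) 0 with hci | hci
          · have : 0 ≤ -(τ * cc i) := by nlinarith
            simp only [ht'def]; linarith [ht i]
          · have hmin := hi₀min i (by simp [hPdef, hci])
            have hmin' := (div_le_div_iff₀ hcci₀ hci).mp hmin
            have hle : τ * cc i ≤ t i := by
              rw [hτdef, div_mul_eq_mul_div, div_le_iff₀ hcci₀]
              nlinarith
            simp only [ht'def]; linarith
        have ht'sum : ∑ i, t' i • v i = ∑ i, t i • v i := by
          simp only [ht'def, sub_smul, Finset.sum_sub_distrib]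
          have : ∑ i, (τ * cc i) • v i = τ • ∑ i, cc i • v i := by
            rw [Finset.smul_sum]
            apply Finset.sum_congr rfl
            intro i _; rw [smul_smul]
          rw [this, hccsum, smul_zero, sub_zero]
        -- support decreased
        have hi₀supp : i₀ ∈ supp := by
          by_contra h
          have := hccsupp i₀ h
          rw [this] at hcci₀; exact lt_irrefl 0 hcci₀
        have ht'i₀ : t' i₀ = 0 := by
          simp only [ht'def, hτdef]
          field_simp
          ring
        have hsub : univ.filter (fun i => t' i ≠ 0) ⊆ supp.erase i₀ := by
          intro i hi
          simp only [Finset.mem_filter, Finset.mem_univ, true_and] at hi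
          rw [Finset.mem_erase]
          constructor
          · rintro rfl; exact hi ht'i₀
          · by_contra h
            have h1 := hccsupp i h
            have h2 : t i = 0 := by
              by_contra h2
              exact h (by simp [hsuppdef, h2])
            exact hi (by simp [ht'def, h1, h2])
        have hcard' : (univ.filter (fun i => t' i ≠ 0)).card ≤ N := by
          have h1 := Finset.card_le_card hsub
          have h2 : (supp.erase i₀).card < supp.card := Finset.card_erase_lt_of_mem hi₀supp
          omega
        obtain ⟨s, t'', hs1, hs2, hs3, hs4⟩ := ih t' hcard' ht'
        exact ⟨s, t'', hs1, hs2, hs3, hs4.trans ht'sum⟩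

/-- A finitely generated cone in `κ → ℝ` is closed. -/
lemma fg_cone_closed (v : ι → κ → ℝ) :
    IsClosed {x : κ → ℝ | ∃ t : ι → ℝ, (∀ i, 0 ≤ t i) ∧ x = ∑ i, t i • v i} := by
  classical
  have key : {x : κ → ℝ | ∃ t : ι → ℝ, (∀ i, 0 ≤ t i) ∧ x = ∑ i, t i • v i} =
      ⋃ s ∈ {s : Finset ι | LinearIndependent ℝ (fun i : s => v i)},
        (fun y : s → ℝ => ∑ i : s, y i • v i) '' {y | ∀ i, 0 ≤ y i} := by
    ext x
    simp only [Set.mem_setOf_eq, Set.mem_iUnion, Set.mem_image]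
    constructor
    · rintro ⟨t, ht, rfl⟩
      obtain ⟨s, t', hLI, ht', hsupp, hsum⟩ := cara_aux v (univ.filter (fun i => t i ≠ 0)).card t le_rfl ht
      refine ⟨s, hLI, fun i => t' i, fun i => ht' i, ?_⟩
      rw [← hsum]
      rw [← Finset.sum_subset (Finset.subset_univ s) (fun i _ hi => by rw [hsupp i hi, zero_smul])]
      exact Finset.sum_coe_sort s (fun i => t' i • v i)
    · rintro ⟨s, hLI, y, hy, rfl⟩
      refine ⟨fun i => if hi : i ∈ s then y ⟨i, hi⟩ else 0, ?_, ?_⟩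
      · intro i
        by_cases hi : i ∈ s <;> simp [hi, hy]
      · rw [← Finset.sum_subset (Finset.subset_univ s) (fun i _ hi => by simp [hi])]
        rw [← Finset.sum_attach s fun i => (if hi : i ∈ s then y ⟨i, hi⟩ else 0) • v i]
        apply Finset.sum_congr rfl
        intro i _
        simp [i.2]
  rw [key]
  apply Set.Finite.isClosed_biUnion (Set.toFinite _)
  intro s hs
  set T : (s → ℝ) →ₗ[ℝ] (κ → ℝ) :=
    { toFun := fun y => ∑ i : s, y i • v i
      map_add' := by
        intro y z
        rw [← Finset.sum_add_distrib]
        apply Finset.sum_congr rfl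
        intro i _
        simp [add_smul]
      map_smul' := by
        intro c y
        rw [Finset.smul_sum]
        apply Finset.sum_congr rfl
        intro i _
        simp [smul_smul] } with hTdef
  have hinj : LinearMap.ker T = ⊥ := by
    rw [LinearMap.ker_eq_bot']
    intro y hy
    have := Fintype.linearIndependent_iff.mp hs y hy
    exact funext fun i => this i
  have hce := LinearMap.isClosedEmbedding_of_injective hinj
  have hC2 : IsClosed {y : s → ℝ | ∀ i, 0 ≤ y i} := by
    have : {y : s → ℝ | ∀ i, 0 ≤ y i} = ⋂ i, {y : s → ℝ | 0 ≤ y i} := by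
      ext y; simp [Set.mem_iInter]
    rw [this]
    exact isClosed_iInter fun i => isClosed_le continuous_const (continuous_apply i)
  exact hce.isClosedMap _ hC2

/-- Farkas' lemma. -/
theorem farkas_cone (v : ι → κ → ℝ) (b : κ → ℝ)
    (hpos : ∀ w : κ → ℝ, (∀ i, 0 ≤ v i ⬝ᵥ w) → 0 ≤ b ⬝ᵥ w) :
    ∃ t : ι → ℝ, (∀ i, 0 ≤ t i) ∧ b = ∑ i, t i • v i := by
  by_contra hc
  set C := {x : κ → ℝ | ∃ t : ι → ℝ, (∀ i, 0 ≤ t i) ∧ x = ∑ i, t i • v i} with hCdef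
  have hbC : b ∉ C := fun ⟨t, ht, hb⟩ => hc ⟨t, ht, hb⟩
  have hCclosed : IsClosed C := fg_cone_closed v
  have hCconvex : Convex ℝ C := by
    rintro x ⟨tx, htx, rfl⟩ y ⟨ty, hty, rfl⟩ a c ha hc' hac
    refine ⟨fun i => a * tx i + c * ty i,
      fun i => add_nonneg (mul_nonneg ha (htx i)) (mul_nonneg hc' (hty i)), ?_⟩
    rw [Finset.smul_sum, Finset.smul_sum, ← Finset.sum_add_distrib]
    apply Finset.sum_congr rfl
    intro i _
    simp [add_smul, smul_smul]
  obtain ⟨φ, u, hφb, hφC⟩ := geometric_hahn_banach_point_closed hCconvex hCclosed hbC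
  have h0C : (0 : κ → ℝ) ∈ C := ⟨0, fun i => le_rfl, by simp⟩
  have hu0 : u < 0 := by simpa using hφC 0 h0C
  have hφv : ∀ i, 0 ≤ φ (v i) := by
    intro i
    by_contra hneg
    push_neg at hneg
    have hr : 0 < u / φ (v i) := div_pos_of_neg_of_neg hu0 hneg
    have hmem : (u / φ (v i)) • v i ∈ C := by
      refine ⟨fun j => if j = i then u / φ (v i) else 0, ?_, ?_⟩
      · intro j; by_cases hj : j = i <;> simp [hj, hr.le]
      · rw [Finset.sum_eq_single i (fun j _ hj => by simp [hj]) (by simp)]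
        simp
    have hlt := hφC _ hmem
    rw [ContinuousLinearMap.map_smul, smul_eq_mul] at hlt
    rw [div_mul_cancel₀ u (ne_of_lt hneg)] at hlt
    exact lt_irrefl _ hlt
  set ps : κ → (κ → ℝ) := fun k => Pi.single k 1 with hpsdef
  set w : κ → ℝ := fun k => φ (ps k) with hwdef
  have hφdot : ∀ x : κ → ℝ, φ x = x ⬝ᵥ w := by
    intro x
    have hx : x = ∑ k, x k • ps k := by
      funext j
      simp [ps, Finset.sum_apply, Pi.single_apply, Finset.sum_ite_eq, mul_comm]
    conv_lhs => rw [hx]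
    rw [map_sum]
    simp only [ContinuousLinearMap.map_smul, smul_eq_mul]
    simp [dotProduct, hwdef]
  have hbw := hpos w (fun i => by rw [← hφdot]; exact hφv i)
  rw [← hφdot] at hbw
  linarith





section Helpers

variable {n m p : ℕ}

lemma pi_single_expand (x : Fin n → ℝ) : x = ∑ k, x k • (Pi.single k 1 : Fin n → ℝ) := by
  funext j
  simp [Finset.sum_apply, Pi.single_apply, Finset.sum_ite_eq, mul_comm]

lemma fderiv_eq_dot (φ : (Fin n → ℝ) → ℝ) (x d : Fin n → ℝ) :
    fderiv ℝ φ x d = gradVec φ x ⬝ᵥ d := by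
  conv_lhs => rw [pi_single_expand d]
  rw [map_sum]
  simp [gradVec, dotProduct, ContinuousLinearMap.map_smul, mul_comm]

lemma clm_eq_zero_of_grad {φ : ((Fin n → ℝ) →L[ℝ] ℝ)}
    (hg : ∀ k, φ (Pi.single k 1) = 0) : φ = 0 := by
  ext w
  conv_lhs => rw [pi_single_expand w]
  rw [map_sum]
  simp [ContinuousLinearMap.map_smul, hg]

lemma hessQ_eq (φ : (Fin n → ℝ) → ℝ) (x d : Fin n → ℝ) :
    hessQ φ x d = fderiv ℝ (fderiv ℝ φ) x d d := by
  rw [hessQ, iteratedFDeriv_two_apply]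
  simp

lemma hessQ_smul (φ : (Fin n → ℝ) → ℝ) (x d : Fin n → ℝ) (r : ℝ) :
    hessQ φ x (r • d) = r ^ 2 * hessQ φ x d := by
  rw [hessQ_eq, hessQ_eq, ContinuousLinearMap.map_smul]
  simp only [ContinuousLinearMap.coe_smul', Pi.smul_apply, ContinuousLinearMap.map_smul,
    smul_eq_mul]
  ring

lemma hessQ_add (F G : (Fin n → ℝ) → ℝ) (hF : ContDiff ℝ 2 F) (hG : ContDiff ℝ 2 G)
    (x d : Fin n → ℝ) :
    hessQ (fun y => F y + G y) x d = hessQ F x d + hessQ G x d := by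
  have hF' : ContDiff ℝ ((2:ℕ) : WithTop ℕ∞) F := by exact_mod_cast hF
  have hG' : ContDiff ℝ ((2:ℕ) : WithTop ℕ∞) G := by exact_mod_cast hG
  have : (fun y => F y + G y) = F + G := rfl
  rw [hessQ, this, iteratedFDeriv_add_apply hF'.contDiffAt hG'.contDiffAt]
  rfl

lemma hessQ_const_mul (F : (Fin n → ℝ) → ℝ) (c : ℝ) (hF : ContDiff ℝ 2 F) (x d : Fin n → ℝ) :
    hessQ (fun y => c * F y) x d = c * hessQ F x d := by
  have hF' : ContDiff ℝ ((2:ℕ) : WithTop ℕ∞) F := by exact_mod_cast hF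
  have : (fun y => c * F y) = c • F := rfl
  rw [hessQ, this, iteratedFDeriv_const_smul_apply hF'.contDiffAt]
  rfl

lemma hessQ_finset_sum {α : Type*} (s : Finset α) (F : α → (Fin n → ℝ) → ℝ) (c : α → ℝ)
    (hF : ∀ a, ContDiff ℝ 2 (F a)) (x d : Fin n → ℝ) :
    hessQ (fun y => ∑ a ∈ s, c a * F a y) x d = ∑ a ∈ s, c a * hessQ (F a) x d := by
  induction s using Finset.cons_induction with
  | empty =>
      simp only [Finset.sum_empty]
      rw [hessQ, iteratedFDeriv_zero_fun]
      simp
  | cons a s ha ih =>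
      have hrw : (fun y => ∑ b ∈ Finset.cons a s ha, c b * F b y)
          = fun y => (c a * F a y) + ∑ b ∈ s, c b * F b y := by
        funext y; rw [Finset.sum_cons]
      rw [hrw, hessQ_add _ _ (contDiff_const.mul (hF a))
        (ContDiff.sum fun i _ => contDiff_const.mul (hF i)) x d,
        hessQ_const_mul _ _ (hF a), ih, Finset.sum_cons]

lemma continuousAt_clm_apply' {E F : Type*} [NormedAddCommGroup E] [NormedSpace ℝ E]
    [NormedAddCommGroup F] [NormedSpace ℝ F]
    {c : ℝ → (E →L[ℝ] F)} {u : ℝ → E} {t : ℝ}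
    (hc : ContinuousAt c t) (hu : ContinuousAt u t) :
    ContinuousAt (fun s => c s (u s)) t := by
  have hb : Continuous (fun q : (E →L[ℝ] F) × E => q.1 q.2) :=
    isBoundedBilinearMap_apply.continuous
  exact (hb.continuousAt).comp (hc.prodMk hu)

lemma hasDerivAt_comp_curve {F : (Fin n → ℝ) → ℝ} {x : ℝ → Fin n → ℝ} {t : ℝ} {v : Fin n → ℝ}
    (hF : ContDiff ℝ 2 F) (hx : HasDerivAt x v t) :
    HasDerivAt (fun s => F (x s)) (fderiv ℝ F (x t) v) t :=
  ((hF.differentiable (by norm_num) (x t)).hasFDerivAt).comp_hasDerivAt t hx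

lemma hasDerivAt_comp_curve2 {F : (Fin n → ℝ) → ℝ} {x v : ℝ → Fin n → ℝ} {t : ℝ}
    {a : Fin n → ℝ} (hF : ContDiff ℝ 2 F) (hx : HasDerivAt x (v t) t) (hv : HasDerivAt v a t) :
    HasDerivAt (fun s => fderiv ℝ F (x s) (v s))
      (fderiv ℝ (fderiv ℝ F) (x t) (v t) (v t) + fderiv ℝ F (x t) a) t := by
  have h1 : ContDiff ℝ 1 (fderiv ℝ F) := hF.fderiv_right (by norm_num)
  have hc : HasDerivAt (fun s => fderiv ℝ F (x s)) (fderiv ℝ (fderiv ℝ F) (x t) (v t)) t :=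
    ((h1.differentiable (by norm_num) (x t)).hasFDerivAt).comp_hasDerivAt t hx
  exact hc.clm_apply hv

lemma li_surj (L : Fin m → ((Fin n → ℝ) →L[ℝ] ℝ)) (hLI : LinearIndependent ℝ L)
    (a : Fin m → ℝ) : ∃ w, ∀ i, L i w = a i := by
  set T : (Fin n → ℝ) →ₗ[ℝ] (Fin m → ℝ) := LinearMap.pi (fun i => (L i).toLinearMap) with hT
  suffices hsurj : LinearMap.range T = ⊤ by
    have : a ∈ LinearMap.range T := by rw [hsurj]; trivial
    obtain ⟨w, hw⟩ := this
    exact ⟨w, fun i => by rw [← hw]; rfl⟩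
  by_contra hne
  obtain ⟨x, hx⟩ : ∃ x, x ∉ LinearMap.range T := by
    by_contra hall
    push_neg at hall
    exact hne (Submodule.eq_top_iff'.mpr hall)
  obtain ⟨ψ, hψx, hψ0⟩ := Submodule.exists_dual_map_eq_bot_of_notMem hx inferInstance
  have hker : ∀ z ∈ LinearMap.range T, ψ z = 0 := by
    intro z hz
    have : ψ z ∈ Submodule.map ψ (LinearMap.range T) := Submodule.mem_map_of_mem hz
    rw [hψ0] at this
    simpa using this
  set y : Fin m → ℝ := fun i => ψ (Pi.single i 1) with hy
  have hψrep : ∀ z : Fin m → ℝ, ψ z = ∑ i, z i * y i := by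
    intro z
    conv_lhs => rw [pi_single_expand z]
    rw [map_sum]
    simp [hy, smul_eq_mul]
  have hcomb : ∀ w, ∑ i, y i * L i w = 0 := by
    intro w
    have := hker (T w) (LinearMap.mem_range_self T w)
    rw [hψrep] at this
    simpa [hT, LinearMap.pi_apply, mul_comm] using this
  have hzero : ∀ i, y i = 0 := by
    have : ∑ i, y i • L i = 0 := by
      ext w
      simpa [ContinuousLinearMap.sum_apply, smul_eq_mul] using hcomb w
    exact fun i => Fintype.linearIndependent_iff.mp hLI y this i
  have : ψ x = 0 := by
    rw [hψrep]
    simp [hzero]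
  exact hψx this

lemma descent2 (φ φ1 φ2 : ℝ → ℝ) (h1 : ∀ᶠ t in 𝓝 (0:ℝ), HasDerivAt φ (φ1 t) t)
    (h2 : ∀ᶠ t in 𝓝 (0:ℝ), HasDerivAt φ1 (φ2 t) t)
    (hc : ContinuousAt φ2 0) (h10 : φ1 0 = 0) (h20 : φ2 0 < 0) :
    ∀ᶠ t in 𝓝[>] (0:ℝ), φ t < φ 0 := by
  have hev : ∀ᶠ t in 𝓝 (0:ℝ), φ2 t < 0 := by
    have : Set.Iio (0:ℝ) ∈ 𝓝 (φ2 0) := Iio_mem_nhds h20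
    exact hc.preimage_mem_nhds this
  obtain ⟨δ, hδ, hball⟩ := Metric.eventually_nhds_iff.mp ((h1.and h2).and hev)
  have hmem : ∀ t, t ∈ Set.Ioo (-δ) δ → dist t 0 < δ := by
    intro t ht
    rw [Real.dist_eq, sub_zero]
    exact abs_lt.mpr ⟨ht.1, ht.2⟩
  have hanti1 : StrictAntiOn φ1 (Set.Ioo (-δ) δ) := by
    apply strictAntiOn_of_deriv_neg (convex_Ioo _ _)
    · intro t ht
      exact (((hball (hmem t ht)).1.2).continuousAt).continuousWithinAt
    · intro t ht
      rw [interior_Ioo] at ht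
      rw [((hball (hmem t ht)).1.2).deriv]
      exact (hball (hmem t ht)).2
  have h0I : (0:ℝ) ∈ Set.Ioo (-δ) δ := ⟨by linarith, hδ⟩
  have hφ1neg : ∀ t ∈ Set.Ioo (0:ℝ) δ, φ1 t < 0 := by
    intro t ht
    have := hanti1 h0I ⟨by linarith [ht.1], ht.2⟩ ht.1
    rwa [h10] at this
  have hanti : StrictAntiOn φ (Set.Ico 0 δ) := by
    apply strictAntiOn_of_deriv_neg (convex_Ico _ _)
    · intro t ht
      have hd : dist t 0 < δ := by
        rw [Real.dist_eq, sub_zero, abs_of_nonneg ht.1]; exact ht.2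
      exact (((hball hd).1.1).continuousAt).continuousWithinAt
    · intro t ht
      rw [interior_Ico] at ht
      have hd : dist t 0 < δ := by
        rw [Real.dist_eq, sub_zero, abs_of_pos ht.1]; exact ht.2
      rw [((hball hd).1.1).deriv]
      exact hφ1neg t ht
  filter_upwards [Ioo_mem_nhdsGT_of_mem (Set.mem_Ico.mpr ⟨le_rfl, hδ⟩)] with t ht
  exact hanti ⟨le_rfl, hδ⟩ ⟨ht.1.le, ht.2⟩ ht.1

lemma descent1 (φ φ1 : ℝ → ℝ) (h1 : ∀ᶠ t in 𝓝 (0:ℝ), HasDerivAt φ (φ1 t) t)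
    (hc : ContinuousAt φ1 0) (h10 : φ1 0 < 0) :
    ∀ᶠ t in 𝓝[>] (0:ℝ), φ t < φ 0 := by
  have hev : ∀ᶠ t in 𝓝 (0:ℝ), φ1 t < 0 :=
    hc.preimage_mem_nhds (Iio_mem_nhds h10)
  obtain ⟨δ, hδ, hball⟩ := Metric.eventually_nhds_iff.mp (h1.and hev)
  have hanti : StrictAntiOn φ (Set.Ico 0 δ) := by
    apply strictAntiOn_of_deriv_neg (convex_Ico _ _)
    · intro t ht
      have hd : dist t 0 < δ := by
        rw [Real.dist_eq, sub_zero, abs_of_nonneg ht.1]; exact ht.2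
      exact (((hball hd).1).continuousAt).continuousWithinAt
    · intro t ht
      rw [interior_Ico] at ht
      have hd : dist t 0 < δ := by
        rw [Real.dist_eq, sub_zero, abs_of_pos ht.1]; exact ht.2
      rw [((hball hd).1).deriv]
      exact (hball hd).2
  filter_upwards [Ioo_mem_nhdsGT_of_mem (Set.mem_Ico.mpr ⟨le_rfl, hδ⟩)] with t ht
  exact hanti ⟨le_rfl, hδ⟩ ⟨ht.1.le, ht.2⟩ ht.1

end Helpers

lemma loc2 {E' : Type*} [NormedAddCommGroup E'] [NormedSpace ℝ E'] {y : ℝ → E'}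
    (hy : ContDiffAt ℝ 2 y 0) :
    ∃ V : Set ℝ, IsOpen V ∧ (0:ℝ) ∈ V ∧ (∀ t ∈ V, HasDerivAt y (deriv y t) t) ∧
      (∀ t ∈ V, HasDerivAt (deriv y) (deriv (deriv y) t) t) ∧
      ContinuousOn (deriv (deriv y)) V := by
  obtain ⟨s₀, hs₀, hcon⟩ := hy.contDiffOn (le_refl 2) (by simp)
  obtain ⟨V, hVs, hVo, hV0⟩ := mem_nhds_iff.mp hs₀
  have hcV : ContDiffOn ℝ 2 y V := hcon.mono hVs
  have hd1 : DifferentiableOn ℝ y V := hcV.differentiableOn (by norm_num)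
  have hder : ContDiffOn ℝ 1 (deriv y) V := hcV.deriv_of_isOpen hVo (by norm_num)
  have hd2 : DifferentiableOn ℝ (deriv y) V := hder.differentiableOn (by norm_num)
  refine ⟨V, hVo, hV0, ?_, ?_, ?_⟩
  · exact fun t ht => (hd1.differentiableAt (hVo.mem_nhds ht)).hasDerivAt
  · exact fun t ht => (hd2.differentiableAt (hVo.mem_nhds ht)).hasDerivAt
  · exact (hder.deriv_of_isOpen (m := 0) hVo (by norm_num)).continuousOn

section Arc

lemma arc_exists {n m : ℕ} (h : Fin m → (Fin n → ℝ) → ℝ) (hh : ∀ i, ContDiff ℝ 2 (h i))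
    (xs d0 W : Fin n → ℝ)
    (hfeas0 : ∀ i, h i xs = 0)
    (hLI : LinearIndependent ℝ (fun i : Fin m => fderiv ℝ (h i) xs))
    (hd0 : ∀ i, fderiv ℝ (h i) xs d0 = 0)
    (hW : ∀ i, fderiv ℝ (h i) xs W = - hessQ (h i) xs d0) :
    ∃ x : ℝ → (Fin n → ℝ),
      x 0 = xs ∧ deriv x 0 = d0 ∧ deriv (deriv x) 0 = W ∧
      (∀ᶠ t in 𝓝 (0:ℝ), HasDerivAt x (deriv x t) t) ∧
      (∀ᶠ t in 𝓝 (0:ℝ), HasDerivAt (deriv x) (deriv (deriv x) t) t) ∧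
      ContinuousAt (deriv (deriv x)) 0 ∧
      (∀ᶠ t in 𝓝 (0:ℝ), ∀ i, h i (x t) = 0) := by
  classical
  -- right inverse of the Jacobian of h
  set DHl : (Fin n → ℝ) →ₗ[ℝ] (Fin m → ℝ) :=
    LinearMap.pi (fun i => (fderiv ℝ (h i) xs).toLinearMap) with hDHl
  have hsurj : LinearMap.range DHl = ⊤ := by
    rw [LinearMap.range_eq_top]
    intro a
    obtain ⟨w, hw⟩ := li_surj _ hLI a
    exact ⟨w, funext fun i => hw i⟩
  obtain ⟨R, hR⟩ := LinearMap.exists_rightInverse_of_surjective DHl hsurj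
  set Rc : (Fin m → ℝ) →L[ℝ] (Fin n → ℝ) := LinearMap.toContinuousLinearMap R with hRcdef
  have hRinv : ∀ (v : Fin m → ℝ) (i : Fin m), fderiv ℝ (h i) xs (Rc v) = v i := by
    intro v i
    have h1 : DHl (R v) = v := LinearMap.congr_fun hR v
    have h2 := congrFun h1 i
    simpa [hDHl, LinearMap.pi_apply, hRcdef] using h2
  set base : ℝ → (Fin n → ℝ) := fun t => xs + t • d0 + (t^2/2) • W with hbase
  set H : (Fin n → ℝ) → (Fin m → ℝ) := fun y i => h i y with hH
  have hHcd : ContDiff ℝ 2 H := contDiff_pi.mpr hh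
  set q : ℝ × (Fin m → ℝ) → (Fin n → ℝ) := fun z => base z.1 + Rc z.2 with hq
  have hqcd : ContDiff ℝ 2 q := by
    have h1 : ContDiff ℝ 2 (fun z : ℝ × (Fin m → ℝ) => xs + z.1 • d0) :=
      contDiff_const.add (contDiff_fst.smul contDiff_const)
    have h2 : ContDiff ℝ 2 (fun z : ℝ × (Fin m → ℝ) => (z.1^2/2) • W) :=
      ((contDiff_fst.pow 2).div_const 2).smul contDiff_const
    have h3 : ContDiff ℝ 2 (fun z : ℝ × (Fin m → ℝ) => Rc z.2) :=
      Rc.contDiff.comp contDiff_snd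
    exact (h1.add h2).add h3
  set Ψ : ℝ × (Fin m → ℝ) → ℝ × (Fin m → ℝ) := fun z => (z.1, H (q z)) with hΨdef
  have hΨcd : ContDiff ℝ 2 Ψ := contDiff_fst.prodMk (hHcd.comp hqcd)
  set DH : (Fin n → ℝ) →L[ℝ] (Fin m → ℝ) :=
    ContinuousLinearMap.pi (fun i => fderiv ℝ (h i) xs) with hDH
  have hHder : HasFDerivAt H DH xs := by
    rw [hasFDerivAt_pi']
    intro i
    have heq : (ContinuousLinearMap.proj i).comp DH = fderiv ℝ (h i) xs := by
      ext w
      simp [hDH]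
    rw [heq]
    exact ((hh i).differentiable (by norm_num) xs).hasFDerivAt
  set Dq : ℝ × (Fin m → ℝ) →L[ℝ] (Fin n → ℝ) :=
    ((ContinuousLinearMap.fst ℝ ℝ (Fin m → ℝ)).smulRight d0)
      + Rc.comp (ContinuousLinearMap.snd ℝ ℝ (Fin m → ℝ)) with hDq
  have hqder : HasFDerivAt q Dq ((0:ℝ), (0 : Fin m → ℝ)) := by
    have h1 : HasFDerivAt (fun z : ℝ × (Fin m → ℝ) => xs + z.1 • d0)
        ((ContinuousLinearMap.fst ℝ ℝ (Fin m → ℝ)).smulRight d0) (0, 0) :=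
      (hasFDerivAt_fst.smul_const d0).const_add xs
    have h2 : HasFDerivAt (fun z : ℝ × (Fin m → ℝ) => (z.1^2/2) • W)
        (0 : ℝ × (Fin m → ℝ) →L[ℝ] (Fin n → ℝ)) (0, 0) := by
      have hd : HasDerivAt (fun a : ℝ => a^2/2) 0 (0:ℝ) := by
        have := (hasDerivAt_pow 2 (0:ℝ)).div_const 2
        simpa using this
      have hs := HasDerivAt.comp_hasFDerivAt (𝕜 := ℝ) (f := (Prod.fst : ℝ × (Fin m → ℝ) → ℝ))
          ((0:ℝ), (0 : Fin m → ℝ)) hd hasFDerivAt_fst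
      have hs' : HasFDerivAt (fun z : ℝ × (Fin m → ℝ) => z.1^2/2)
          ((0:ℝ) • (ContinuousLinearMap.fst ℝ ℝ (Fin m → ℝ))) (0, 0) := hs
      have hsm := hs'.smul_const W
      have hzero : (((0:ℝ) • (ContinuousLinearMap.fst ℝ ℝ (Fin m → ℝ)))).smulRight W
          = (0 : ℝ × (Fin m → ℝ) →L[ℝ] (Fin n → ℝ)) := by
        ext z x
        · simp [ContinuousLinearMap.smulRight_apply]
        · simp [ContinuousLinearMap.smulRight_apply]
      rwa [hzero] at hsm
    have h3 : HasFDerivAt (fun z : ℝ × (Fin m → ℝ) => Rc z.2)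
        (Rc.comp (ContinuousLinearMap.snd ℝ ℝ (Fin m → ℝ))) (0, 0) :=
      (Rc.comp (ContinuousLinearMap.snd ℝ ℝ (Fin m → ℝ))).hasFDerivAt
    have hsum := (h1.add h2).add h3
    have heq : (ContinuousLinearMap.fst ℝ ℝ (Fin m → ℝ)).smulRight d0
        + (0 : ℝ × (Fin m → ℝ) →L[ℝ] (Fin n → ℝ))
        + Rc.comp (ContinuousLinearMap.snd ℝ ℝ (Fin m → ℝ)) = Dq := by
      rw [add_zero]
    rwa [heq] at hsum
  have hq00 : q (0, 0) = xs := by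
    simp [hq, hbase, map_zero]
  have hΨder : HasFDerivAt Ψ
      ((ContinuousLinearMap.fst ℝ ℝ (Fin m → ℝ)).prod (DH.comp Dq)) ((0:ℝ), (0 : Fin m → ℝ)) := by
    apply HasFDerivAt.prodMk
    · exact hasFDerivAt_fst
    · have hH' : HasFDerivAt H DH (q (0,0)) := by rw [hq00]; exact hHder
      exact hH'.comp (0,0) hqder
  have hid : ((ContinuousLinearMap.fst ℝ ℝ (Fin m → ℝ)).prod (DH.comp Dq))
      = (↑(ContinuousLinearEquiv.refl ℝ (ℝ × (Fin m → ℝ))) : ℝ × (Fin m → ℝ) →L[ℝ] ℝ × (Fin m → ℝ)) := by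
    apply ContinuousLinearMap.ext
    intro z
    have hsnd : DH (Dq z) = z.2 := by
      funext i
      simp only [hDq, ContinuousLinearMap.add_apply, ContinuousLinearMap.smulRight_apply,
        ContinuousLinearMap.coe_fst', ContinuousLinearMap.comp_apply,
        ContinuousLinearMap.coe_snd', _root_.map_add, _root_.map_smul, hDH, ContinuousLinearMap.pi_apply]
      rw [hd0 i]
      have := hRinv z.2 i
      simp only [hRcdef] at this ⊢
      rw [this]
      simp
    simp [ContinuousLinearMap.prod_apply, ContinuousLinearMap.comp_apply, hsnd,
      Prod.ext_iff]
  have hΨat : ContDiffAt ℝ 2 Ψ ((0:ℝ), (0 : Fin m → ℝ)) := hΨcd.contDiffAt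
  have hone : (2 : WithTop ℕ∞) ≠ 0 := by norm_num
  have hΨ' : HasFDerivAt Ψ
      (↑(ContinuousLinearEquiv.refl ℝ (ℝ × (Fin m → ℝ))) : ℝ × (Fin m → ℝ) →L[ℝ] ℝ × (Fin m → ℝ))
      ((0:ℝ), (0 : Fin m → ℝ)) := by
    rw [← hid]; exact hΨder
  set G := hΨat.localInverse hΨ' hone with hGdef
  have hΨ00 : Ψ ((0:ℝ), (0 : Fin m → ℝ)) = ((0:ℝ), (0 : Fin m → ℝ)) := by
    have h0 : H xs = 0 := funext fun i => hfeas0 i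
    have hrfl : Ψ ((0:ℝ), (0 : Fin m → ℝ)) = ((0:ℝ), H (q ((0:ℝ), (0 : Fin m → ℝ)))) := rfl
    rw [hrfl, hq00, h0]
  have hGcd : ContDiffAt ℝ 2 G ((0:ℝ), (0 : Fin m → ℝ)) := by
    have := hΨat.to_localInverse hΨ' hone
    rwa [hΨ00] at this
  have hG0 : G ((0:ℝ), (0 : Fin m → ℝ)) = ((0:ℝ), (0 : Fin m → ℝ)) := by
    have := hΨat.localInverse_apply_image hΨ' hone
    rwa [hΨ00] at this
  have hGright : ∀ᶠ y in 𝓝 (((0:ℝ), (0 : Fin m → ℝ))), Ψ (G y) = y := by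
    have := (hΨat.hasStrictFDerivAt' hΨ' hone).eventually_right_inverse
    rwa [hΨ00] at this
  set u : ℝ → (Fin m → ℝ) := fun t => (G (t, 0)).2 with hu
  set ρ : ℝ → (Fin n → ℝ) := fun t => Rc (u t) with hρ
  set x : ℝ → (Fin n → ℝ) := fun t => base t + ρ t with hx
  have htend : Tendsto (fun t : ℝ => ((t, 0) : ℝ × (Fin m → ℝ))) (𝓝 0) (𝓝 (0, 0)) := by
    have hc : Continuous (fun t : ℝ => ((t, 0) : ℝ × (Fin m → ℝ))) :=
      continuous_id.prodMk continuous_const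
    exact hc.tendsto' 0 (0,0) rfl
  have hkey : ∀ᶠ t in 𝓝 (0:ℝ), Ψ (G (t, 0)) = (t, 0) := htend.eventually hGright
  have hfirst : ∀ᶠ t in 𝓝 (0:ℝ), (G (t, 0)).1 = t := by
    filter_upwards [hkey] with t ht
    exact congrArg Prod.fst ht
  have hhx0 : ∀ᶠ t in 𝓝 (0:ℝ), ∀ i, h i (x t) = 0 := by
    filter_upwards [hkey, hfirst] with t ht h1
    intro i
    have h2 : H (q (G (t, 0))) = 0 := congrArg Prod.snd ht
    have h3 : q (G (t, 0)) = x t := by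
      simp only [hq, h1, hx, hρ, hu]
    rw [h3] at h2
    exact congrFun h2 i
  have hucd : ContDiffAt ℝ 2 u 0 := by
    have h1 : ContDiffAt ℝ 2 (fun t : ℝ => ((t, 0) : ℝ × (Fin m → ℝ))) 0 :=
      (contDiff_id.prodMk contDiff_const).contDiffAt
    have h2 : ContDiffAt ℝ 2 (Prod.snd ∘ G) ((0:ℝ), (0 : Fin m → ℝ)) := by
      apply ContDiffAt.comp
      · exact contDiff_snd.contDiffAt
      · exact hGcd
    exact ContDiffAt.comp (f := fun t : ℝ => ((t, 0) : ℝ × (Fin m → ℝ))) 0 h2 h1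
  have hρcd : ContDiffAt ℝ 2 ρ 0 := (Rc.contDiff.contDiffAt).comp 0 hucd
  have hbasecd : ContDiff ℝ 2 base := by
    have h1 : ContDiff ℝ 2 (fun t : ℝ => xs + t • d0) :=
      contDiff_const.add (contDiff_id.smul contDiff_const)
    have h2 : ContDiff ℝ 2 (fun t : ℝ => (t^2/2) • W) :=
      ((contDiff_id.pow 2).div_const 2).smul contDiff_const
    exact h1.add h2
  have hxcd : ContDiffAt ℝ 2 x 0 := (hbasecd.contDiffAt).add hρcd
  obtain ⟨Vx, hVxo, hVx0, hx1, hx2, hx''c⟩ := loc2 hxcd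
  obtain ⟨Vρ, hVρo, hVρ0, hρ1, hρ2, _⟩ := loc2 hρcd
  obtain ⟨Vu, hVuo, hVu0, hu1, hu2, _⟩ := loc2 hucd
  have hbase1 : ∀ t : ℝ, HasDerivAt base (d0 + t • W) t := by
    intro t
    have h1 : HasDerivAt (fun s : ℝ => xs + s • d0) d0 t := by
      have := (hasDerivAt_id t).smul_const d0
      simpa using this.const_add xs
    have h2 : HasDerivAt (fun s : ℝ => (s^2/2) • W) (t • W) t := by
      have hd : HasDerivAt (fun s : ℝ => s^2/2) t t := by
        have := (hasDerivAt_pow 2 t).div_const 2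
        simpa using this
      simpa using hd.smul_const W
    exact h1.add h2
  have hu01 : HasDerivAt u (deriv u 0) 0 := hu1 0 hVu0
  have hρd0 : HasDerivAt ρ (Rc (deriv u 0)) 0 :=
    Rc.hasFDerivAt.comp_hasDerivAt 0 hu01
  have hxd : HasDerivAt x (d0 + Rc (deriv u 0)) 0 := by
    have := (hbase1 0).add hρd0
    rw [zero_smul, add_zero] at this; exact this
  obtain ⟨O, hOsub, hOo, hO0⟩ := mem_nhds_iff.mp hhx0
  have hκ : ∀ t ∈ O ∩ Vx, ∀ i, fderiv ℝ (h i) (x t) (deriv x t) = 0 := by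
    intro t ht i
    have hDer : HasDerivAt (fun s => h i (x s)) (fderiv ℝ (h i) (x t) (deriv x t)) t :=
      hasDerivAt_comp_curve (hh i) (hx1 t ht.2)
    have hzero : (fun s => h i (x s)) =ᶠ[𝓝 t] (fun _ => (0:ℝ)) := by
      filter_upwards [hOo.mem_nhds ht.1] with s hs using (hOsub hs) i
    have hDer0 : HasDerivAt (fun s => h i (x s)) 0 t :=
      (hasDerivAt_const t (0:ℝ)).congr_of_eventuallyEq hzero
    exact hDer.unique hDer0
  have hu00 : u 0 = 0 := by
    simp only [hu]
    rw [hG0]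
  have hx0 : x 0 = xs := by
    simp [hx, hbase, hρ, hu00]
  have hdx0' : deriv x 0 = d0 + Rc (deriv u 0) := (hx1 0 hVx0).unique hxd
  have hu'0 : deriv u 0 = 0 := by
    have hκ0 := hκ 0 ⟨hO0, hVx0⟩
    funext i
    have h1 := hκ0 i
    rw [hx0, hdx0'] at h1
    rw [map_add, hd0 i, hRinv] at h1
    simpa using h1
  have hdx0 : deriv x 0 = d0 := by
    rw [hdx0', hu'0, map_zero, add_zero]
  have hderivx_ev : ∀ᶠ t in 𝓝 (0:ℝ), deriv x t = (d0 + t • W) + deriv ρ t := by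
    filter_upwards [hVxo.mem_nhds hVx0, hVρo.mem_nhds hVρ0] with t htx htρ
    exact (hx1 t htx).unique ((hbase1 t).add (hρ1 t htρ))
  have hderivρ_ev : ∀ᶠ t in 𝓝 (0:ℝ), deriv ρ t = Rc (deriv u t) := by
    filter_upwards [hVρo.mem_nhds hVρ0, hVuo.mem_nhds hVu0] with t htρ htu
    exact (hρ1 t htρ).unique (Rc.hasFDerivAt.comp_hasDerivAt t (hu1 t htu))
  have hρ''0 : deriv (deriv ρ) 0 = Rc (deriv (deriv u) 0) := by
    have h1 : deriv (deriv ρ) 0 = deriv (fun t => Rc (deriv u t)) 0 :=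
      Filter.EventuallyEq.deriv_eq hderivρ_ev
    rw [h1]
    exact (Rc.hasFDerivAt.comp_hasDerivAt 0 (hu2 0 hVu0)).deriv
  have hx''0 : deriv (deriv x) 0 = W + Rc (deriv (deriv u) 0) := by
    have h1 : deriv (deriv x) 0 = deriv (fun t => (d0 + t • W) + deriv ρ t) 0 :=
      Filter.EventuallyEq.deriv_eq hderivx_ev
    rw [h1]
    have h2 : HasDerivAt (fun t : ℝ => d0 + t • W) W 0 := by
      have := (hasDerivAt_id (0:ℝ)).smul_const W
      simpa using this.const_add d0
    have h3 : HasDerivAt (deriv ρ) (deriv (deriv ρ) 0) 0 := hρ2 0 hVρ0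
    have h4 := (h2.add h3).deriv
    rw [show (fun t => d0 + t • W + deriv ρ t) = ((fun t : ℝ => d0 + t • W) + deriv ρ) from rfl, h4, hρ''0]
  have hu''0 : deriv (deriv u) 0 = 0 := by
    funext i
    have hκev : (fun t => fderiv ℝ (h i) (x t) (deriv x t)) =ᶠ[𝓝 (0:ℝ)] (fun _ => (0:ℝ)) := by
      filter_upwards [hOo.mem_nhds hO0, hVxo.mem_nhds hVx0] with t h1 h2 using hκ t ⟨h1, h2⟩ i
    have hder2 : HasDerivAt (fun t => fderiv ℝ (h i) (x t) (deriv x t))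
        (fderiv ℝ (fderiv ℝ (h i)) (x 0) (deriv x 0) (deriv x 0)
          + fderiv ℝ (h i) (x 0) (deriv (deriv x) 0)) 0 :=
      hasDerivAt_comp_curve2 (hh i) (hx1 0 hVx0) (hx2 0 hVx0)
    have hdeq : deriv (fun t => fderiv ℝ (h i) (x t) (deriv x t)) 0 = 0 := by
      rw [Filter.EventuallyEq.deriv_eq hκev]
      simp
    have h5 := hder2.deriv
    rw [hdeq] at h5
    rw [hx0, hdx0, hx''0] at h5
    rw [map_add, hW i, hRinv] at h5
    rw [← hessQ_eq] at h5
    simp only [Pi.zero_apply]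
    linarith [h5.symm]
  have hx''W : deriv (deriv x) 0 = W := by
    rw [hx''0, hu''0, map_zero, add_zero]
  refine ⟨x, hx0, hdx0, hx''W, ?_, ?_, ?_, hhx0⟩
  · filter_upwards [hVxo.mem_nhds hVx0] with t ht using hx1 t ht
  · filter_upwards [hVxo.mem_nhds hVx0] with t ht using hx2 t ht
  · exact hx''c.continuousAt (hVxo.mem_nhds hVx0)

end Arc

section ArcContra

lemma arc_contra {n m p : ℕ} (f : (Fin n → ℝ) → ℝ) (h : Fin m → (Fin n → ℝ) → ℝ)
    (g : Fin p → (Fin n → ℝ) → ℝ)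
    (hf : ContDiff ℝ 2 f) (hh : ∀ i, ContDiff ℝ 2 (h i)) (hg : ∀ j, ContDiff ℝ 2 (g j))
    (xs : Fin n → ℝ) (hfeas : Feas h g xs)
    (hmin : IsLocalMinOn f {x | Feas h g x} xs)
    (hLI : LinearIndependent ℝ (fun i : Fin m => fderiv ℝ (h i) xs))
    (d0 W : Fin n → ℝ)
    (hd0h : ∀ i, fderiv ℝ (h i) xs d0 = 0)
    (hd0g : ∀ j, g j xs = 0 → fderiv ℝ (g j) xs d0 = 0)
    (hWh : ∀ i, fderiv ℝ (h i) xs W = - hessQ (h i) xs d0)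
    (hWg : ∀ j, g j xs = 0 → fderiv ℝ (g j) xs W + hessQ (g j) xs d0 < 0)
    (hfcase : fderiv ℝ f xs d0 < 0 ∨
      (fderiv ℝ f xs d0 = 0 ∧ fderiv ℝ f xs W + hessQ f xs d0 < 0)) : False := by
  obtain ⟨x, hx0, hx'0, hx''0, hx1, hx2, hx''c, hxh⟩ :=
    arc_exists h hh xs d0 W hfeas.1 hLI hd0h hWh
  have hxc : ContinuousAt x 0 := hx1.self_of_nhds.continuousAt
  have hx'c : ContinuousAt (deriv x) 0 := hx2.self_of_nhds.continuousAt
  -- generic machinery for a C² function F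
  have hev1 : ∀ (F : (Fin n → ℝ) → ℝ), ContDiff ℝ 2 F →
      ∀ᶠ t in 𝓝 (0:ℝ), HasDerivAt (fun s => F (x s)) (fderiv ℝ F (x t) (deriv x t)) t := by
    intro F hF
    filter_upwards [hx1] with t ht using hasDerivAt_comp_curve hF ht
  have hev2 : ∀ (F : (Fin n → ℝ) → ℝ), ContDiff ℝ 2 F →
      ∀ᶠ t in 𝓝 (0:ℝ), HasDerivAt (fun s => fderiv ℝ F (x s) (deriv x s))
        (fderiv ℝ (fderiv ℝ F) (x t) (deriv x t) (deriv x t)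
          + fderiv ℝ F (x t) (deriv (deriv x) t)) t := by
    intro F hF
    filter_upwards [hx1, hx2] with t h1 h2 using hasDerivAt_comp_curve2 hF h1 h2
  have hc1 : ∀ (F : (Fin n → ℝ) → ℝ), ContDiff ℝ 2 F →
      ContinuousAt (fun t => fderiv ℝ F (x t) (deriv x t)) 0 := by
    intro F hF
    exact continuousAt_clm_apply'
      (((hF.continuous_fderiv (by norm_num)).continuousAt).comp hxc) hx'c
  have hc2 : ∀ (F : (Fin n → ℝ) → ℝ), ContDiff ℝ 2 F →
      ContinuousAt (fun t => fderiv ℝ (fderiv ℝ F) (x t) (deriv x t) (deriv x t)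
        + fderiv ℝ F (x t) (deriv (deriv x) t)) 0 := by
    intro F hF
    have hA : ContDiff ℝ 1 (fderiv ℝ F) := hF.fderiv_right (by norm_num)
    have hAc : Continuous (fderiv ℝ (fderiv ℝ F)) := hA.continuous_fderiv (by norm_num)
    have c1 : ContinuousAt (fun t => fderiv ℝ (fderiv ℝ F) (x t) (deriv x t)) 0 :=
      continuousAt_clm_apply' ((hAc.continuousAt).comp hxc) hx'c
    have c2 : ContinuousAt (fun t => fderiv ℝ (fderiv ℝ F) (x t) (deriv x t) (deriv x t)) 0 :=
      continuousAt_clm_apply' c1 hx'c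
    have c3 : ContinuousAt (fun t => fderiv ℝ F (x t) (deriv (deriv x) t)) 0 :=
      continuousAt_clm_apply'
        (((hF.continuous_fderiv (by norm_num)).continuousAt).comp hxc) hx''c
    exact c2.add c3
  -- decrease of f along the arc
  have hfdec : ∀ᶠ t in 𝓝[>] (0:ℝ), f (x t) < f xs := by
    have hfx0 : f (x 0) = f xs := by rw [hx0]
    rcases hfcase with hneg | ⟨hzero, hneg⟩
    · have := descent1 (fun s => f (x s)) (fun t => fderiv ℝ f (x t) (deriv x t))
        (hev1 f hf) (hc1 f hf)
        (by show fderiv ℝ f (x 0) (deriv x 0) < 0; rw [hx0, hx'0]; exact hneg)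
      filter_upwards [this] with t ht
      rwa [hfx0] at ht
    · have := descent2 (fun s => f (x s)) (fun t => fderiv ℝ f (x t) (deriv x t))
        (fun t => fderiv ℝ (fderiv ℝ f) (x t) (deriv x t) (deriv x t)
          + fderiv ℝ f (x t) (deriv (deriv x) t))
        (hev1 f hf) (hev2 f hf) (hc2 f hf)
        (by show fderiv ℝ f (x 0) (deriv x 0) = 0; rw [hx0, hx'0]; exact hzero)
        (by show fderiv ℝ (fderiv ℝ f) (x 0) (deriv x 0) (deriv x 0)
              + fderiv ℝ f (x 0) (deriv (deriv x) 0) < 0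
            rw [hx0, hx'0, hx''0, ← hessQ_eq]; linarith)
      filter_upwards [this] with t ht
      rwa [hfx0] at ht
  -- inequality constraints along the arc
  have hgdec : ∀ j, ∀ᶠ t in 𝓝[>] (0:ℝ), g j (x t) ≤ 0 := by
    intro j
    by_cases hj : g j xs = 0
    · have := descent2 (fun s => g j (x s)) (fun t => fderiv ℝ (g j) (x t) (deriv x t))
        (fun t => fderiv ℝ (fderiv ℝ (g j)) (x t) (deriv x t) (deriv x t)
          + fderiv ℝ (g j) (x t) (deriv (deriv x) t))
        (hev1 _ (hg j)) (hev2 _ (hg j)) (hc2 _ (hg j))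
        (by show fderiv ℝ (g j) (x 0) (deriv x 0) = 0; rw [hx0, hx'0]; exact hd0g j hj)
        (by show fderiv ℝ (fderiv ℝ (g j)) (x 0) (deriv x 0) (deriv x 0)
              + fderiv ℝ (g j) (x 0) (deriv (deriv x) 0) < 0
            rw [hx0, hx'0, hx''0, ← hessQ_eq]; linarith [hWg j hj])
      filter_upwards [this] with t ht
      have : g j (x 0) = 0 := by rw [hx0]; exact hj
      rw [this] at ht
      exact ht.le
    · have hlt : g j xs < 0 := lt_of_le_of_ne (hfeas.2 j) hj
      have hcont : ContinuousAt (fun t => g j (x t)) 0 :=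
        ((hg j).continuous.continuousAt).comp hxc
      have hpre : (fun t => g j (x t)) ⁻¹' (Set.Iio 0) ∈ 𝓝 (0:ℝ) :=
        hcont.preimage_mem_nhds (by rw [hx0]; exact Iio_mem_nhds hlt)
      have : ∀ᶠ t in 𝓝 (0:ℝ), g j (x t) < 0 := hpre
      exact (this.filter_mono nhdsWithin_le_nhds).mono fun t ht => ht.le
  have hheq : ∀ᶠ t in 𝓝[>] (0:ℝ), ∀ i, h i (x t) = 0 :=
    hxh.filter_mono nhdsWithin_le_nhds
  have hfeasev : ∀ᶠ t in 𝓝[>] (0:ℝ), x t ∈ {y | Feas h g y} := by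
    have hall : ∀ᶠ t in 𝓝[>] (0:ℝ), ∀ j, g j (x t) ≤ 0 := eventually_all.mpr hgdec
    filter_upwards [hheq, hall] with t h1 h2
    exact ⟨h1, h2⟩
  have htends : Tendsto x (𝓝[>] (0:ℝ)) (𝓝[{y | Feas h g y}] xs) := by
    rw [tendsto_nhdsWithin_iff]
    constructor
    · have := hxc.tendsto
      rw [hx0] at this
      exact this.mono_left nhdsWithin_le_nhds
    · exact hfeasev
  have hup : ∀ᶠ t in 𝓝[>] (0:ℝ), f xs ≤ f (x t) := htends.eventually hmin
  obtain ⟨t, h1, h2⟩ := (hfdec.and hup).exists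
  linarith

end ArcContra

section LagrLemmas

variable {n m p : ℕ}

lemma contDiff_Lagr (f : (Fin n → ℝ) → ℝ) (h : Fin m → (Fin n → ℝ) → ℝ)
    (g : Fin p → (Fin n → ℝ) → ℝ) (lam : Fin m → ℝ) (mu : Fin p → ℝ)
    (hf : ContDiff ℝ 2 f) (hh : ∀ i, ContDiff ℝ 2 (h i)) (hg : ∀ j, ContDiff ℝ 2 (g j)) :
    ContDiff ℝ 2 (Lagr f h g lam mu) := by
  show ContDiff ℝ 2 fun x => f x + ∑ i, lam i * h i x + ∑ j, mu j * g j x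
  exact (hf.add (ContDiff.sum fun i _ => contDiff_const.mul (hh i))).add
    (ContDiff.sum fun j _ => contDiff_const.mul (hg j))

lemma fderiv_Lagr_apply (f : (Fin n → ℝ) → ℝ) (h : Fin m → (Fin n → ℝ) → ℝ)
    (g : Fin p → (Fin n → ℝ) → ℝ) (lam : Fin m → ℝ) (mu : Fin p → ℝ)
    (hf : ContDiff ℝ 2 f) (hh : ∀ i, ContDiff ℝ 2 (h i)) (hg : ∀ j, ContDiff ℝ 2 (g j))
    (xs w : Fin n → ℝ) :
    fderiv ℝ (Lagr f h g lam mu) xs w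
      = fderiv ℝ f xs w + (∑ i, lam i * fderiv ℝ (h i) xs w)
        + ∑ j, mu j * fderiv ℝ (g j) xs w := by
  have Hf : HasFDerivAt f (fderiv ℝ f xs) xs := (hf.differentiable (by norm_num) xs).hasFDerivAt
  have Hsum1 : HasFDerivAt (fun x => ∑ i, lam i * h i x)
      (∑ i, lam i • fderiv ℝ (h i) xs) xs :=
    HasFDerivAt.fun_sum (fun i _ =>
      (((hh i).differentiable (by norm_num) xs).hasFDerivAt).const_mul (lam i))
  have Hsum2 : HasFDerivAt (fun x => ∑ j, mu j * g j x)
      (∑ j, mu j • fderiv ℝ (g j) xs) xs :=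
    HasFDerivAt.fun_sum (fun j _ =>
      (((hg j).differentiable (by norm_num) xs).hasFDerivAt).const_mul (mu j))
  have Htot : HasFDerivAt (Lagr f h g lam mu)
      (fderiv ℝ f xs + (∑ i, lam i • fderiv ℝ (h i) xs) + ∑ j, mu j • fderiv ℝ (g j) xs) xs :=
    (Hf.add Hsum1).add Hsum2
  rw [Htot.fderiv]
  simp [ContinuousLinearMap.add_apply, ContinuousLinearMap.sum_apply,
    ContinuousLinearMap.smul_apply, smul_eq_mul]

lemma hessQ_Lagr (f : (Fin n → ℝ) → ℝ) (h : Fin m → (Fin n → ℝ) → ℝ)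
    (g : Fin p → (Fin n → ℝ) → ℝ) (lam : Fin m → ℝ) (mu : Fin p → ℝ)
    (hf : ContDiff ℝ 2 f) (hh : ∀ i, ContDiff ℝ 2 (h i)) (hg : ∀ j, ContDiff ℝ 2 (g j))
    (xs d : Fin n → ℝ) :
    hessQ (Lagr f h g lam mu) xs d
      = hessQ f xs d + (∑ i, lam i * hessQ (h i) xs d) + ∑ j, mu j * hessQ (g j) xs d := by
  have e1 := hessQ_add (fun x => f x + ∑ i, lam i * h i x) (fun x => ∑ j, mu j * g j x)
    (hf.add (ContDiff.sum fun i _ => contDiff_const.mul (hh i)))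
    (ContDiff.sum fun j _ => contDiff_const.mul (hg j)) xs d
  have e2 := hessQ_add f (fun x => ∑ i, lam i * h i x) hf
    (ContDiff.sum fun i _ => contDiff_const.mul (hh i)) xs d
  have e3 := hessQ_finset_sum Finset.univ h lam hh xs d
  have e4 := hessQ_finset_sum Finset.univ g mu hg xs d
  calc hessQ (Lagr f h g lam mu) xs d
      = hessQ (fun x => (f x + ∑ i, lam i * h i x) + ∑ j, mu j * g j x) xs d := rfl
    _ = hessQ (fun x => f x + ∑ i, lam i * h i x) xs d
        + hessQ (fun x => ∑ j, mu j * g j x) xs d := e1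
    _ = hessQ f xs d + (∑ i, lam i * hessQ (h i) xs d) + ∑ j, mu j * hessQ (g j) xs d := by
        rw [e2, e3, e4]

end LagrLemmas

set_option maxHeartbeats 3000000 in
/-- MFCQ plus rank `J(x*) = n - 1` imply WSOC at a local minimizer. -/
theorem stmt9 {n m p : ℕ} (f : (Fin n → ℝ) → ℝ) (h : Fin m → (Fin n → ℝ) → ℝ)
    (g : Fin p → (Fin n → ℝ) → ℝ)
    (hf : ContDiff ℝ 2 f) (hh : ∀ i, ContDiff ℝ 2 (h i)) (hg : ∀ j, ContDiff ℝ 2 (g j))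
    (xs : Fin n → ℝ) (hfeas : Feas h g xs)
    (hmin : IsLocalMinOn f {x | Feas h g x} xs)
    (hmfcq : MFCQ h g xs)
    (hrank : (Jac h g xs xs).rank + 1 = n) :
    ∃ (lam : Fin m → ℝ) (mu : Fin p → ℝ), IsLagMult f h g xs lam mu ∧
      ∀ d, critSub h g xs d → 0 ≤ hessQ (Lagr f h g lam mu) xs d := by
  classical
  obtain ⟨hfeash, hfeasg⟩ := hfeas
  obtain ⟨hLI, dh, hdh_h, hdh_g⟩ := hmfcq
  set J := Jac h g xs xs with hJdef
  set K := LinearMap.ker (Matrix.mulVecLin J) with hKdef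
  have hrowl : ∀ (d : Fin n → ℝ) (i : Fin m),
      (Matrix.mulVecLin J d) (Sum.inl i) = fderiv ℝ (h i) xs d := by
    intro d i
    rw [fderiv_eq_dot]
    simp [hJdef, Jac, Matrix.mulVecLin_apply, Matrix.mulVec, dotProduct, gradVec]
  have hrowr : ∀ (d : Fin n → ℝ) (j : {j : Fin p // g j xs = 0}),
      (Matrix.mulVecLin J d) (Sum.inr j) = fderiv ℝ (g j.1) xs d := by
    intro d j
    rw [fderiv_eq_dot]
    simp [hJdef, Jac, Matrix.mulVecLin_apply, Matrix.mulVec, dotProduct, gradVec]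
  have hmem : ∀ d : Fin n → ℝ, d ∈ K ↔ critSub h g xs d := by
    intro d
    rw [hKdef, LinearMap.mem_ker]
    constructor
    · intro hd
      refine ⟨fun i => ?_, fun j hj => ?_⟩
      · rw [← hrowl d i, hd]; rfl
      · rw [← hrowr d ⟨j, hj⟩, hd]; rfl
    · intro hd
      funext idx
      cases idx with
      | inl i => rw [hrowl d i, hd.1 i]; rfl
      | inr j => rw [hrowr d j, hd.2 j.1 j.2]; rfl
  have hdim : Module.finrank ℝ K = 1 := by
    have h1 := LinearMap.finrank_range_add_finrank_ker (Matrix.mulVecLin J)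
    have h2 : Module.finrank ℝ (Fin n → ℝ) = n := by
      simp [Module.finrank_pi]
    rw [h2] at h1
    have h3 : J.rank = Module.finrank ℝ (LinearMap.range (Matrix.mulVecLin J)) := rfl
    rw [hKdef]
    omega
  obtain ⟨v, hv0, hvgen⟩ := finrank_eq_one_iff'.mp hdim
  set d0 : Fin n → ℝ := (v : Fin n → ℝ) with hd0def
  have hd0K : d0 ∈ K := v.2
  have hd0crit : critSub h g xs d0 := (hmem d0).mp hd0K
  have hd0h : ∀ i, fderiv ℝ (h i) xs d0 = 0 := hd0crit.1
  have hd0g : ∀ j, g j xs = 0 → fderiv ℝ (g j) xs d0 = 0 := hd0crit.2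
  have hgen : ∀ d, critSub h g xs d → ∃ r : ℝ, d = r • d0 := by
    intro d hd
    obtain ⟨c, hc⟩ := hvgen ⟨d, (hmem d).mpr hd⟩
    refine ⟨c, ?_⟩
    have := congrArg (Subtype.val) hc
    exact this.symm
  have hsolve : ∀ a' : Fin m → ℝ, ∃ w, ∀ i, fderiv ℝ (h i) xs w = a' i := li_surj _ hLI
  -- strictification
  have hstrict : ∀ (e : Fin n → ℝ) (a' : Fin m → ℝ), ∃ Wv : Fin n → ℝ,
      (∀ i, fderiv ℝ (h i) xs Wv = a' i) ∧
      ∀ j, g j xs = 0 → fderiv ℝ (g j) xs Wv + hessQ (g j) xs e < 0 := by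
    intro e a'
    obtain ⟨w₀, hw₀⟩ := hsolve a'
    set c : {j : Fin p // g j xs = 0} → ℝ :=
      fun j => (fderiv ℝ (g j.1) xs w₀ + hessQ (g j.1) xs e) / (- fderiv ℝ (g j.1) xs dh)
      with hcdef
    set τ : ℝ := 1 + ∑ j : {j : Fin p // g j xs = 0}, |c j| with hτdef
    refine ⟨w₀ + τ • dh, fun i => ?_, fun j hj => ?_⟩
    · rw [map_add, hw₀, ContinuousLinearMap.map_smul]
      rw [hdh_h i]
      simp
    · have hD : 0 < - fderiv ℝ (g j) xs dh := by linarith [hdh_g j hj]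
      have hcj : c ⟨j, hj⟩ < τ := by
        have h1 : c ⟨j, hj⟩ ≤ |c ⟨j, hj⟩| := le_abs_self _
        have h2 : |c ⟨j, hj⟩| ≤ ∑ j' : {j : Fin p // g j xs = 0}, |c j'| :=
          Finset.single_le_sum (f := fun j' : {j : Fin p // g j xs = 0} => |c j'|)
            (fun _ _ => abs_nonneg _) (Finset.mem_univ (⟨j, hj⟩ : {j : Fin p // g j xs = 0}))
        have h3 : 0 ≤ ∑ j' : {j : Fin p // g j xs = 0}, |c j'| :=
          Finset.sum_nonneg fun _ _ => abs_nonneg _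
        rw [hτdef]
        linarith
      have hnum : fderiv ℝ (g j) xs w₀ + hessQ (g j) xs e < τ * (- fderiv ℝ (g j) xs dh) :=
        (div_lt_iff₀ hD).mp hcj
      simp only [_root_.map_add, ContinuousLinearMap.map_smul, smul_eq_mul]
      nlinarith
  -- first-order case
  by_cases hfd0 : fderiv ℝ f xs d0 = 0
  swap
  · exfalso
    set e : Fin n → ℝ := if fderiv ℝ f xs d0 < 0 then d0 else -d0 with hedef
    have hfe : fderiv ℝ f xs e < 0 := by
      rcases lt_or_gt_of_ne hfd0 with hlt | hgt
      · rw [hedef, if_pos hlt]; exact hlt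
      · rw [hedef, if_neg (not_lt.mpr hgt.le), map_neg]; linarith
    have heh : ∀ i, fderiv ℝ (h i) xs e = 0 := by
      intro i
      rcases ite_eq_or_eq (fderiv ℝ f xs d0 < 0) d0 (-d0) with hcase | hcase <;>
        rw [hedef, hcase] <;> simp [hd0h i]
    have heg : ∀ j, g j xs = 0 → fderiv ℝ (g j) xs e = 0 := by
      intro j hj
      rcases ite_eq_or_eq (fderiv ℝ f xs d0 < 0) d0 (-d0) with hcase | hcase <;>
        rw [hedef, hcase] <;> simp [hd0g j hj]
    have hehess : ∀ F : (Fin n → ℝ) → ℝ, hessQ F xs e = hessQ F xs d0 := by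
      intro F
      rcases ite_eq_or_eq (fderiv ℝ f xs d0 < 0) d0 (-d0) with hcase | hcase <;>
        rw [hedef, hcase] <;>
        first
          | rfl
          | (have hneg : (-d0) = (-1 : ℝ) • d0 := by funext k; simp
             rw [hneg, hessQ_smul]
             norm_num)
    obtain ⟨Wv, hWv1, hWv2⟩ := hstrict e (fun i => - hessQ (h i) xs e)
    exact arc_contra f h g hf hh hg xs ⟨hfeash, hfeasg⟩ hmin hLI e Wv heh heg
      (fun i => by rw [hWv1 i]) (fun j hj => hWv2 j hj) (Or.inl hfe)
  · -- second-order case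
    set a : Fin m → ℝ := fun i => - hessQ (h i) xs d0 with hadef
    set b : {j : Fin p // g j xs = 0} → ℝ := fun j => - hessQ (g j.1) xs d0 with hbdef
    set γ : ℝ := - hessQ f xs d0 with hγdef
    by_cases hP : ∀ w : Fin n → ℝ, (∀ i, fderiv ℝ (h i) xs w = a i) →
        (∀ j : {j : Fin p // g j xs = 0}, fderiv ℝ (g j.1) xs w ≤ b j) → γ ≤ fderiv ℝ f xs w
    swap
    · -- a descent direction exists: contradiction with local minimality
      exfalso
      push_neg at hP
      obtain ⟨w, hweq, hwle, hwlt⟩ := hP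
      set D := fderiv ℝ f xs dh with hDdef
      set ε : ℝ := min 1 ((γ - fderiv ℝ f xs w) / (1 + |D|)) with hεdef
      have hγw : 0 < γ - fderiv ℝ f xs w := by linarith
      have hεpos : 0 < ε := lt_min one_pos (div_pos hγw (by positivity))
      have hεD : ε * D < γ - fderiv ℝ f xs w := by
        have h1 : ε ≤ (γ - fderiv ℝ f xs w) / (1 + |D|) := min_le_right _ _
        have h2 : ε * D ≤ ε * |D| := by nlinarith [le_abs_self D]
        have h3 : ε * |D| ≤ (γ - fderiv ℝ f xs w) / (1 + |D|) * |D| := by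
          nlinarith [abs_nonneg D]
        have h4 : (γ - fderiv ℝ f xs w) / (1 + |D|) * |D| < γ - fderiv ℝ f xs w := by
          rw [div_mul_eq_mul_div, div_lt_iff₀ (by positivity : (0:ℝ) < 1 + |D|)]
          nlinarith [abs_nonneg D]
        linarith
      apply arc_contra f h g hf hh hg xs ⟨hfeash, hfeasg⟩ hmin hLI d0 (w + ε • dh) hd0h hd0g
      · intro i
        rw [_root_.map_add, hweq, ContinuousLinearMap.map_smul, hdh_h i]
        have : a i = - hessQ (h i) xs d0 := rfl
        rw [smul_zero, add_zero, this]
      · intro j hj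
        have h1 := hwle ⟨j, hj⟩
        have hb1 : b ⟨j, hj⟩ = - hessQ (g j) xs d0 := rfl
        have h2 := hdh_g j hj
        have h3 := mul_neg_of_pos_of_neg hεpos h2
        simp only [_root_.map_add, ContinuousLinearMap.map_smul, smul_eq_mul]
        rw [hb1] at h1
        linarith
      · right
        refine ⟨hfd0, ?_⟩
        have hγ1 : γ = - hessQ f xs d0 := rfl
        simp only [_root_.map_add, ContinuousLinearMap.map_smul, smul_eq_mul]
        rw [← hDdef]
        linarith
    · -- Farkas: produce a multiplier
      obtain ⟨W₀, hW₀eq, hW₀g⟩ := hstrict d0 a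
      have hW₀g' : ∀ j : {j : Fin p // g j xs = 0}, fderiv ℝ (g j.1) xs W₀ < b j := by
        intro j
        have h1 := hW₀g j.1 j.2
        have hb1 : b j = - hessQ (g j.1) xs d0 := rfl
        rw [hb1]
        linarith
      set pad : (Fin n → ℝ) → ℝ → ((Fin n ⊕ Unit) → ℝ) :=
        fun y r => Sum.elim y (fun _ => r) with hpaddef
      set vgen : ((Fin m ⊕ Fin m) ⊕ ({j : Fin p // g j xs = 0} ⊕ Unit)) → ((Fin n ⊕ Unit) → ℝ) :=
        Sum.elim
          (Sum.elim (fun i => pad (gradVec (h i) xs) (- a i))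
                    (fun i => pad (- gradVec (h i) xs) (a i)))
          (Sum.elim (fun j => pad (- gradVec (g j.1) xs) (b j))
                    (fun _ => pad 0 1)) with hvgendef
      have hpaddot : ∀ (y : Fin n → ℝ) (r : ℝ) (z : Fin n → ℝ) (s' : ℝ),
          (pad y r) ⬝ᵥ (pad z s') = y ⬝ᵥ z + r * s' := by
        intro y r z s'
        simp [hpaddef, dotProduct, Fintype.sum_sum_type]
      have hpos : ∀ wt : (Fin n ⊕ Unit) → ℝ,
          (∀ idx, 0 ≤ vgen idx ⬝ᵥ wt) → 0 ≤ (pad (gradVec f xs) (-γ)) ⬝ᵥ wt := by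
        intro wt hwt
        set w : Fin n → ℝ := fun k => wt (Sum.inl k) with hwdef
        set sc : ℝ := wt (Sum.inr ()) with hscdef
        have hwteq : wt = pad w sc := by
          funext k
          cases k with
          | inl k => rfl
          | inr u => cases u; rfl
        have hs : 0 ≤ sc := by
          have h0 := hwt (Sum.inr (Sum.inr ()))
          rw [hwteq] at h0
          have hg1 : vgen (Sum.inr (Sum.inr ())) = pad 0 1 := rfl
          rw [hg1, hpaddot] at h0
          simpa [zero_dotProduct] using h0
        have hcondh : ∀ i, fderiv ℝ (h i) xs w = sc * a i := by
          intro i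
          have h1 := hwt (Sum.inl (Sum.inl i))
          have h2 := hwt (Sum.inl (Sum.inr i))
          rw [hwteq] at h1 h2
          have hg1 : vgen (Sum.inl (Sum.inl i)) = pad (gradVec (h i) xs) (- a i) := rfl
          have hg2 : vgen (Sum.inl (Sum.inr i)) = pad (- gradVec (h i) xs) (a i) := rfl
          rw [hg1, hpaddot] at h1
          rw [hg2, hpaddot, neg_dotProduct] at h2
          rw [fderiv_eq_dot]
          linarith
        have hcondg : ∀ j : {j : Fin p // g j xs = 0}, fderiv ℝ (g j.1) xs w ≤ sc * b j := by
          intro j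
          have h1 := hwt (Sum.inr (Sum.inl j))
          rw [hwteq] at h1
          have hg1 : vgen (Sum.inr (Sum.inl j)) = pad (- gradVec (g j.1) xs) (b j) := rfl
          rw [hg1, hpaddot, neg_dotProduct] at h1
          rw [fderiv_eq_dot]
          linarith
        rw [hwteq, hpaddot, ← fderiv_eq_dot]
        rcases eq_or_lt_of_le hs with hsc0 | hscpos
        · -- recession direction
          have hrec_h : ∀ i, fderiv ℝ (h i) xs w = 0 := by
            intro i
            rw [hcondh i, ← hsc0]
            ring
          have hrec_g : ∀ j : {j : Fin p // g j xs = 0}, fderiv ℝ (g j.1) xs w ≤ 0 := by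
            intro j
            have h1 := hcondg j
            rw [← hsc0] at h1
            simpa using h1
          have hf_w : 0 ≤ fderiv ℝ f xs w := by
            by_contra hneg
            push_neg at hneg
            set τ : ℝ := (fderiv ℝ f xs W₀ - γ + 1) / (- fderiv ℝ f xs w) with hτ2
            have hwneg : 0 < - fderiv ℝ f xs w := by linarith
            have hτnn : 0 ≤ τ ∨ τ < 0 := le_or_gt 0 τ |>.imp id id
            have heq1 : ∀ i, fderiv ℝ (h i) xs (W₀ + τ • w) = a i := by
              intro i
              rw [_root_.map_add, hW₀eq i, ContinuousLinearMap.map_smul, hrec_h i]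
              simp
            have hle1 : ∀ j : {j : Fin p // g j xs = 0},
                fderiv ℝ (g j.1) xs (W₀ + τ • w) ≤ b j := by
              intro j
              rw [_root_.map_add, ContinuousLinearMap.map_smul, smul_eq_mul]
              rcases hτnn with hτ0 | hτ0
              · have := mul_nonpos_of_nonneg_of_nonpos hτ0 (hrec_g j)
                linarith [hW₀g' j]
              · exfalso
                have : 0 < τ := div_pos (by linarith [hP W₀ hW₀eq (fun j' => (hW₀g' j').le)]) hwneg
                linarith
            have happ := hP (W₀ + τ • w) heq1 hle1
            rw [_root_.map_add, ContinuousLinearMap.map_smul, smul_eq_mul] at happ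
            have hτval : τ * fderiv ℝ f xs w = -(fderiv ℝ f xs W₀ - γ + 1) := by
              rw [hτ2]
              field_simp
              rw [mul_div_cancel_right₀ _ hneg.ne]
            linarith
          rw [← hsc0]
          simpa using hf_w
        · -- positive multiplier of the original system
          have heq1 : ∀ i, fderiv ℝ (h i) xs (sc⁻¹ • w) = a i := by
            intro i
            rw [ContinuousLinearMap.map_smul, smul_eq_mul, hcondh i]
            field_simp
          have hle1 : ∀ j : {j : Fin p // g j xs = 0},
              fderiv ℝ (g j.1) xs (sc⁻¹ • w) ≤ b j := by
            intro j
            rw [ContinuousLinearMap.map_smul, smul_eq_mul]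
            calc sc⁻¹ * fderiv ℝ (g j.1) xs w ≤ sc⁻¹ * (sc * b j) :=
                  mul_le_mul_of_nonneg_left (hcondg j) (inv_nonneg.mpr hscpos.le)
              _ = b j := by field_simp
          have happ := hP (sc⁻¹ • w) heq1 hle1
          rw [ContinuousLinearMap.map_smul, smul_eq_mul] at happ
          have h2 := mul_le_mul_of_nonneg_left happ hscpos.le
          rw [mul_inv_cancel_left₀ (ne_of_gt hscpos)] at h2
          nlinarith
      obtain ⟨t, htnn, hteq⟩ := farkas_cone vgen (pad (gradVec f xs) (-γ)) hpos
      set lam : Fin m → ℝ :=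
        fun i => t (Sum.inl (Sum.inr i)) - t (Sum.inl (Sum.inl i)) with hlamdef
      set mu : Fin p → ℝ :=
        fun j => if hj : g j xs = 0 then t (Sum.inr (Sum.inl ⟨j, hj⟩)) else 0 with hmudef
      set ν : ℝ := t (Sum.inr (Sum.inr ())) with hνdef
      have hmusum : ∀ X : Fin p → ℝ, (∑ j, mu j * X j)
          = ∑ j : {j : Fin p // g j xs = 0}, t (Sum.inr (Sum.inl j)) * X j.1 := by
        intro X
        have h1 : (∑ j, mu j * X j)
            = ∑ j ∈ Finset.univ.filter (fun j => g j xs = 0), mu j * X j := by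
          symm
          apply Finset.sum_subset (Finset.filter_subset _ _)
          intro j _ hj
          rw [Finset.mem_filter] at hj
          have hj' : ¬ g j xs = 0 := fun hc => hj ⟨Finset.mem_univ j, hc⟩
          simp [hmudef, hj']
        rw [h1, Finset.sum_subtype (p := fun j => g j xs = 0)
          (Finset.univ.filter (fun j => g j xs = 0))
          (fun j => by simp) (fun j => mu j * X j)]
        apply Finset.sum_congr rfl
        intro j _
        congr 1
        simp only [hmudef]
        rw [dif_pos j.2]
      -- component identities of the Farkas representation
      have hcompv : ∀ k : Fin n, gradVec f xs k
          = (∑ i, t (Sum.inl (Sum.inl i)) * gradVec (h i) xs k)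
            - (∑ i, t (Sum.inl (Sum.inr i)) * gradVec (h i) xs k)
            - (∑ j : {j : Fin p // g j xs = 0}, t (Sum.inr (Sum.inl j)) * gradVec (g j.1) xs k) := by
        intro k
        have h1 := congrFun hteq (Sum.inl k)
        simp only [hvgendef, hpaddef, hadef, hbdef, hγdef, Finset.sum_apply, Pi.smul_apply,
          smul_eq_mul, Fintype.sum_sum_type, Sum.elim_inl, Sum.elim_inr, Pi.neg_apply,
          Pi.zero_apply, mul_neg, neg_neg, neg_mul, mul_zero, Finset.sum_neg_distrib,
          Finset.sum_const_zero, mul_one, Finset.sum_const, Finset.card_univ,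
          Fintype.card_unit, one_smul] at h1
        linarith [h1]
      have hcomps : hessQ f xs d0
          = (∑ i, t (Sum.inl (Sum.inl i)) * hessQ (h i) xs d0)
            - (∑ i, t (Sum.inl (Sum.inr i)) * hessQ (h i) xs d0)
            - (∑ j : {j : Fin p // g j xs = 0}, t (Sum.inr (Sum.inl j)) * hessQ (g j.1) xs d0)
            + t (Sum.inr (Sum.inr ())) := by
        have h1 := congrFun hteq (Sum.inr ())
        simp only [hvgendef, hpaddef, hadef, hbdef, hγdef, Finset.sum_apply, Pi.smul_apply,
          smul_eq_mul, Fintype.sum_sum_type, Sum.elim_inl, Sum.elim_inr, Pi.neg_apply,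
          Pi.zero_apply, mul_neg, neg_neg, neg_mul, mul_zero, Finset.sum_neg_distrib,
          Finset.sum_const_zero, mul_one, Finset.sum_const, Finset.card_univ,
          Fintype.card_unit, one_smul] at h1
        have hunit : (∑ x : Unit, t (Sum.inr (Sum.inr x))) = t (Sum.inr (Sum.inr ())) := by
          simp
        rw [hunit] at h1
        linarith [h1]
      have hstat : fderiv ℝ (Lagr f h g lam mu) xs = 0 := by
        apply clm_eq_zero_of_grad
        intro k
        rw [fderiv_Lagr_apply f h g lam mu hf hh hg xs]
        show gradVec f xs k + (∑ i, lam i * gradVec (h i) xs k)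
          + (∑ j, mu j * gradVec (g j) xs k) = 0
        rw [hmusum (fun j => gradVec (g j) xs k)]
        have h2 : (∑ i, lam i * gradVec (h i) xs k)
            = (∑ i, t (Sum.inl (Sum.inr i)) * gradVec (h i) xs k)
              - (∑ i, t (Sum.inl (Sum.inl i)) * gradVec (h i) xs k) := by
          rw [← Finset.sum_sub_distrib]
          apply Finset.sum_congr rfl
          intro i _
          simp only [hlamdef]
          ring
        rw [h2, hcompv k]
        ring
      refine ⟨lam, mu, ⟨?_, hstat, ?_⟩, ?_⟩
      · intro j
        by_cases hj : g j xs = 0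
        · simp only [hmudef]
          rw [dif_pos hj]
          exact htnn _
        · simp only [hmudef]
          rw [dif_neg hj]
      · intro j
        by_cases hj : g j xs = 0
        · rw [hj, mul_zero]
        · simp only [hmudef]
          rw [dif_neg hj, zero_mul]
      · intro d hd
        obtain ⟨r, hr⟩ := hgen d hd
        rw [hr, hessQ_smul]
        have hQ : hessQ (Lagr f h g lam mu) xs d0 = t (Sum.inr (Sum.inr ())) := by
          rw [hessQ_Lagr f h g lam mu hf hh hg xs d0]
          rw [hmusum (fun j => hessQ (g j) xs d0)]
          have h2 : (∑ i, lam i * hessQ (h i) xs d0)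
              = (∑ i, t (Sum.inl (Sum.inr i)) * hessQ (h i) xs d0)
                - (∑ i, t (Sum.inl (Sum.inl i)) * hessQ (h i) xs d0) := by
            rw [← Finset.sum_sub_distrib]
            apply Finset.sum_congr rfl
            intro i _
            simp only [hlamdef]
            ring
          rw [h2]
          linarith [hcomps]
        rw [hQ]
        exact mul_nonneg (sq_nonneg r) (htnn _)
end
end

section
/- Let x* be a feasible point of (NLP) with Λ(x*) ≠ ∅. If the rank of the Jacobian matrix J(x) is constant for all x in a neighborhood of x*, then for every d ∈ S(x*) the quadratic form dᵀ∇²ₓₓL(x*,λ,μ)d does not depend on the Lagrange multiplier: for all (λ,μ), (λ',μ') ∈ Λ(x*) and all d ∈ S(x*), dᵀ∇²ₓₓL(x*,λ,μ)d = dᵀ∇²ₓₓL(x*,λ',μ')d. -/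
open scoped BigOperators Pointwise
open Matrix
open Filter

attribute [local instance] Classical.propDecidable

noncomputable section

lemma vanish_mul_vanish {w a : ℝ → ℝ} (hw : DifferentiableAt ℝ w 0) (hw0 : w 0 = 0)
    (ha : ContinuousAt a 0) (ha0 : a 0 = 0) :
    HasDerivAt (fun t => w t * a t) 0 0 := by
  have hws : Tendsto (slope w 0) (nhdsWithin 0 {(0:ℝ)}ᶜ) (nhds (deriv w 0)) :=
    hasDerivAt_iff_tendsto_slope.mp hw.hasDerivAt
  have has : Tendsto a (nhdsWithin 0 {(0:ℝ)}ᶜ) (nhds 0) := by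
    simpa [ha0] using (ha.tendsto.mono_left nhdsWithin_le_nhds)
  rw [hasDerivAt_iff_tendsto_slope]
  have hslope : slope (fun t => w t * a t) 0 = fun t => slope w 0 t * a t := by
    funext t
    simp only [slope_def_field, hw0, ha0, mul_zero, sub_zero, zero_mul]
    rw [div_mul_eq_mul_div]
  rw [hslope]
  simpa using hws.mul has

lemma continuousAt_mulVec' {κ₁ κ₂ : Type*} [Fintype κ₂] {F : ℝ → Matrix κ₁ κ₂ ℝ}
    {w : ℝ → κ₂ → ℝ} (hF : ContinuousAt F 0) (hw : ContinuousAt w 0) :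
    ContinuousAt (fun t => F t *ᵥ w t) 0 := by
  rw [continuousAt_pi]
  intro i
  have : (fun t => (F t *ᵥ w t) i) = fun t => ∑ k, F t i k * w t k := rfl
  rw [this]
  apply tendsto_finset_sum
  intro k _
  exact (((continuous_apply k).comp (continuous_apply i)).continuousAt.comp hF).mul
    ((continuous_apply k).continuousAt.comp hw)

/-- Core lemma: for a pointwise-differentiable matrix family of locally constant rank,
with `v` in the left kernel and `d` in the right kernel at `0`, the scalar function
`t ↦ vᵀ M(t) d` has vanishing derivative at `0`. -/
lemma rank_const_deriv {ι : Type*} [Fintype ι] {n : ℕ}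
    (M : ℝ → Matrix ι (Fin n) ℝ)
    (hdiff : ∀ i k, DifferentiableAt ℝ (fun t => M t i k) 0)
    (hrk : ∀ᶠ t in nhds (0:ℝ), (M t).rank = (M 0).rank)
    (v : ι → ℝ) (hv : v ᵥ* M 0 = 0)
    (d : Fin n → ℝ) (hd : M 0 *ᵥ d = 0) :
    HasDerivAt (fun t => v ⬝ᵥ (M t *ᵥ d)) 0 0 := by
  classical
  set r := (M 0).rank with hr
  -- a basis of the column space of `M 0`
  let b : Module.Basis (Fin r) ℝ (LinearMap.range (M 0).mulVecLin) :=
    Module.finBasis ℝ (LinearMap.range (M 0).mulVecLin)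
  have hXex : ∀ j : Fin r, ∃ x : Fin n → ℝ, M 0 *ᵥ x = (b j : ι → ℝ) := by
    intro j
    obtain ⟨x, hx⟩ := (b j).2
    exact ⟨x, hx⟩
  choose X hX using hXex
  set G : ℝ → Matrix ι (Fin r) ℝ := fun t => Matrix.of fun i j => (M t *ᵥ X j) i with hG
  have hGmul : ∀ t (c : Fin r → ℝ), G t *ᵥ c = M t *ᵥ (∑ j, c j • X j) := by
    intro t c
    funext i
    simp only [hG, Matrix.mulVec, dotProduct, Matrix.of_apply, Finset.sum_apply,
      Pi.smul_apply, smul_eq_mul, Finset.mul_sum, Finset.sum_mul]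
    rw [Finset.sum_comm]
    exact Finset.sum_congr rfl fun j _ => Finset.sum_congr rfl fun k _ => by ring
  -- injectivity of `G 0`
  have hG0 : ∀ c, G 0 *ᵥ c = 0 → c = 0 := by
    intro c hc
    have hcoe : ((∑ j, c j • b j : LinearMap.range (M 0).mulVecLin) : ι → ℝ) = G 0 *ᵥ c := by
      push_cast
      rw [hGmul]
      rw [← Matrix.mulVecLin_apply, map_sum]
      exact Finset.sum_congr rfl fun j _ => by
        rw [LinearMap.map_smul, Matrix.mulVecLin_apply, hX j]
    have hsum : (∑ j, c j • b j : LinearMap.range (M 0).mulVecLin) = 0 := by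
      apply Subtype.ext
      rw [hcoe, hc]
      rfl
    have := (Fintype.linearIndependent_iff.mp b.linearIndependent) c hsum
    funext j; exact this j
  set S : ℝ → Matrix (Fin r) (Fin r) ℝ := fun t => (G t)ᵀ * G t with hSdef
  have hSG : ∀ t c, S t *ᵥ c = (G t)ᵀ *ᵥ (G t *ᵥ c) := by
    intro t c; rw [hSdef]; rw [← Matrix.mulVec_mulVec]
  have hS0inj : ∀ c, S 0 *ᵥ c = 0 → c = 0 := by
    intro c hc
    have h1 : (G 0 *ᵥ c) ⬝ᵥ (G 0 *ᵥ c) = 0 := by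
      have h2 : c ⬝ᵥ (S 0 *ᵥ c) = 0 := by rw [hc, dotProduct_zero]
      rw [hSG, Matrix.dotProduct_mulVec, Matrix.vecMul_transpose] at h2
      exact h2
    exact hG0 c (dotProduct_self_eq_zero.mp h1)
  have hdet0 : (S 0).det ≠ 0 := by
    intro hdet
    obtain ⟨c, hc0, hc⟩ := (Matrix.exists_mulVec_eq_zero_iff).mpr hdet
    exact hc0 (hS0inj c hc)
  -- continuity facts
  have hMc : ContinuousAt M 0 := by
    refine continuousAt_pi.mpr ?_; intro i; rw [continuousAt_pi]; intro k
    exact (hdiff i k).continuousAt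
  have hGc : ContinuousAt G 0 := by
    refine continuousAt_pi.mpr ?_; intro i; rw [continuousAt_pi]; intro j
    have : (fun t => G t i j) = fun t => ∑ k, M t i k * X j k := rfl
    rw [this]
    exact tendsto_finset_sum _ fun k _ => ((hdiff i k).continuousAt.mul continuousAt_const)
  have hSc : ContinuousAt S 0 := by
    have : Continuous fun N : Matrix ι (Fin r) ℝ => Nᵀ * N :=
      continuous_id.matrix_transpose.matrix_mul continuous_id
    exact this.continuousAt.comp hGc
  have hSinv : ContinuousAt (fun t => (S t)⁻¹) 0 := by
    refine (continuousAt_matrix_inv (S 0) ?_).comp hSc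
    rw [Ring.inverse_eq_inv']
    exact continuousAt_inv₀ hdet0
  set A : ℝ → Fin r → ℝ := fun t => (S t)⁻¹ *ᵥ ((G t)ᵀ *ᵥ (M t *ᵥ d)) with hAdef
  have hA0 : A 0 = 0 := by
    rw [hAdef]; simp [hd]
  have hAc : ContinuousAt A 0 := by
    apply continuousAt_mulVec' hSinv
    apply continuousAt_mulVec' _ (continuousAt_mulVec' hMc continuousAt_const)
    exact continuous_id.matrix_transpose.continuousAt.comp hGc
  -- eventually `det (S t) ≠ 0`
  have hdetc : ContinuousAt (fun t => (S t).det) 0 :=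
    continuous_id.matrix_det.continuousAt.comp hSc
  have hdetev : ∀ᶠ t in nhds (0:ℝ), (S t).det ≠ 0 := hdetc.eventually_ne hdet0
  -- eventual identity
  have hE : ∀ᶠ t in nhds (0:ℝ),
      v ⬝ᵥ (M t *ᵥ d) = ∑ j, (v ⬝ᵥ (M t *ᵥ X j)) * A t j := by
    filter_upwards [hrk, hdetev] with t ht hdet
    have hunit : IsUnit (S t).det := isUnit_iff_ne_zero.mpr hdet
    have hGtinj : ∀ c, G t *ᵥ c = 0 → c = 0 := by
      intro c hc
      have : S t *ᵥ c = 0 := by rw [hSG, hc, Matrix.mulVec_zero]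
      calc c = ((S t)⁻¹ * S t) *ᵥ c := by rw [Matrix.nonsing_inv_mul _ hunit, Matrix.one_mulVec]
        _ = (S t)⁻¹ *ᵥ (S t *ᵥ c) := by rw [← Matrix.mulVec_mulVec]
        _ = 0 := by rw [this, Matrix.mulVec_zero]
    have hinj : Function.Injective (G t).mulVecLin := by
      intro c₁ c₂ hcc
      have : (G t).mulVecLin (c₁ - c₂) = 0 := by rw [map_sub, hcc, sub_self]
      have := hGtinj (c₁ - c₂) this
      exact sub_eq_zero.mp this
    have hle : LinearMap.range (G t).mulVecLin ≤ LinearMap.range (M t).mulVecLin := by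
      rintro _ ⟨c, rfl⟩
      exact ⟨∑ j, c j • X j, (hGmul t c).symm⟩
    have hfr1 : Module.finrank ℝ (LinearMap.range (G t).mulVecLin) = r := by
      rw [LinearMap.finrank_range_of_inj hinj, Module.finrank_fin_fun]
    have hfr2 : Module.finrank ℝ (LinearMap.range (M t).mulVecLin) = r := ht
    have heq : LinearMap.range (G t).mulVecLin = LinearMap.range (M t).mulVecLin :=
      Submodule.eq_of_le_of_finrank_le hle (by rw [hfr1, hfr2])
    have hmem : M t *ᵥ d ∈ LinearMap.range (G t).mulVecLin := by
      rw [heq]; exact ⟨d, rfl⟩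
    obtain ⟨c, hc⟩ := hmem
    rw [Matrix.mulVecLin_apply] at hc
    have hAtc : A t = c := by
      have h2 : (G t)ᵀ *ᵥ (M t *ᵥ d) = S t *ᵥ c := by rw [← hc, hSG]
      show (S t)⁻¹ *ᵥ ((G t)ᵀ *ᵥ (M t *ᵥ d)) = c
      rw [h2, Matrix.mulVec_mulVec, Matrix.nonsing_inv_mul _ hunit, Matrix.one_mulVec]
    calc v ⬝ᵥ (M t *ᵥ d) = v ⬝ᵥ (G t *ᵥ A t) := by rw [hAtc, hc]
      _ = (v ᵥ* G t) ⬝ᵥ A t := by rw [Matrix.dotProduct_mulVec]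
      _ = ∑ j, (v ⬝ᵥ (M t *ᵥ X j)) * A t j := by
          simp only [dotProduct, Matrix.vecMul, hG, Matrix.of_apply]
  -- derivative of the sum expression
  have hwdiff : ∀ j : Fin r, DifferentiableAt ℝ (fun t => v ⬝ᵥ (M t *ᵥ X j)) 0 := by
    intro j
    have : (fun t => v ⬝ᵥ (M t *ᵥ X j)) = fun t => ∑ i, v i * ∑ k, M t i k * X j k := rfl
    rw [this]
    exact DifferentiableAt.fun_sum fun i _ =>
      (DifferentiableAt.fun_sum fun k _ => (hdiff i k).mul_const _).const_mul _
  have hw0 : ∀ j : Fin r, v ⬝ᵥ (M 0 *ᵥ X j) = 0 := by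
    intro j
    rw [Matrix.dotProduct_mulVec, hv, zero_dotProduct]
  have H : HasDerivAt (fun t => ∑ j, (v ⬝ᵥ (M t *ᵥ X j)) * A t j) 0 0 := by
    have := HasDerivAt.fun_sum (u := Finset.univ)
      (A := fun j t => (v ⬝ᵥ (M t *ᵥ X j)) * A t j) (A' := fun _ => 0) (x := 0)
      (fun j _ => vanish_mul_vanish (hwdiff j) (hw0 j)
        ((continuous_apply j).continuousAt.comp hAc) (by simp [hA0]))
    simpa using this
  exact H.congr_of_eventuallyEq hE

/-- A continuous linear functional on a pi type, via single-coordinate values. -/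
lemma clm_apply_eq_sum {n : ℕ} (L : (Fin n → ℝ) →L[ℝ] ℝ) (w : Fin n → ℝ) :
    L w = ∑ k, L (Pi.single k 1) * w k := by
  have hw : w = ∑ k, w k • (Pi.single k 1 : Fin n → ℝ) := by
    funext l
    rw [Finset.sum_apply]
    simp [Pi.single_apply, mul_ite, Finset.sum_ite_eq']
  conv_lhs => rw [hw]
  rw [map_sum]
  exact Finset.sum_congr rfl fun k _ => by rw [L.map_smul]; simp [smul_eq_mul, mul_comm]

/-- if the rank of the Jacobian is constant near `xs` and `Λ(xs) ≠ ∅`, then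
on the critical subspace the Hessian quadratic form of the Lagrangian does not depend on
the Lagrange multiplier. -/
theorem stmt11 {n m p : ℕ} (f : (Fin n → ℝ) → ℝ) (h : Fin m → (Fin n → ℝ) → ℝ)
    (g : Fin p → (Fin n → ℝ) → ℝ)
    (hf : ContDiff ℝ 2 f) (hh : ∀ i, ContDiff ℝ 2 (h i)) (hg : ∀ j, ContDiff ℝ 2 (g j))
    (xs : Fin n → ℝ) (hfeas : Feas h g xs)
    (hne : ∃ (lam : Fin m → ℝ) (mu : Fin p → ℝ), IsLagMult f h g xs lam mu)
    (hconst : ∀ᶠ x in nhds xs, (Jac h g xs x).rank = (Jac h g xs xs).rank) :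
    ∀ (lam mu lam' mu'), IsLagMult f h g xs lam mu → IsLagMult f h g xs lam' mu' →
      ∀ d, critSub h g xs d →
        hessQ (Lagr f h g lam mu) xs d = hessQ (Lagr f h g lam' mu') xs d := by
  intro lam mu lam' mu' hLM hLM' d hdS
  classical
  have hmu0 : ∀ j, g j xs ≠ 0 → mu j = 0 := fun j hj =>
    (mul_eq_zero.mp (hLM.2.2 j)).resolve_right hj
  have hmu0' : ∀ j, g j xs ≠ 0 → mu' j = 0 := fun j hj =>
    (mul_eq_zero.mp (hLM'.2.2 j)).resolve_right hj
  set v : (Fin m ⊕ {j : Fin p // g j xs = 0}) → ℝ :=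
    Sum.elim (fun i => lam i - lam' i) (fun j => mu j.1 - mu' j.1) with hv
  set con : (Fin m ⊕ {j : Fin p // g j xs = 0}) → (Fin n → ℝ) → ℝ :=
    Sum.elim h (fun j => g j.1) with hcon_def
  have hcon : ∀ i, ContDiff ℝ 2 (con i) := by
    rintro (i | j)
    · exact hh i
    · exact hg j.1
  set Φ : (Fin n → ℝ) → ℝ := fun x => ∑ i, v i * con i x with hΦdef
  have hΦ : ContDiff ℝ 2 Φ := ContDiff.sum fun i _ => contDiff_const.mul (hcon i)
  have hLagrCD : ∀ (lam : Fin m → ℝ) (mu : Fin p → ℝ), ContDiff ℝ 2 (Lagr f h g lam mu) := by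
    intro lam mu
    exact (hf.add (ContDiff.sum fun i _ => contDiff_const.mul (hh i))).add
      (ContDiff.sum fun j _ => contDiff_const.mul (hg j))
  have hΦx : ∀ x, Φ x = (∑ i : Fin m, (lam i - lam' i) * h i x)
      + ∑ j : {j : Fin p // g j xs = 0}, (mu j.1 - mu' j.1) * g j.1 x := by
    intro x
    show (∑ i : Fin m ⊕ {j : Fin p // g j xs = 0}, v i * con i x) = _
    rw [Fintype.sum_sum_type]
    rfl
  -- decomposition of the Lagrangian difference
  have hdecomp : ∀ x, Lagr f h g lam mu x = Lagr f h g lam' mu' x + Φ x := by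
    intro x
    have h1 : ∑ j : {j : Fin p // g j xs = 0}, (mu j.1 - mu' j.1) * g j.1 x
        = ∑ j : Fin p, (mu j - mu' j) * g j x := by
      rw [← Finset.sum_subtype (Finset.univ.filter fun j : Fin p => g j xs = 0)
        (fun j => by simp) (fun j => (mu j - mu' j) * g j x)]
      refine Finset.sum_subset (Finset.subset_univ _) fun j _ hj => ?_
      have hjne : g j xs ≠ 0 := by simpa using hj
      rw [hmu0 j hjne, hmu0' j hjne, sub_zero, zero_mul]
    rw [hΦx, h1]
    simp only [Lagr, sub_mul, Finset.sum_sub_distrib]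
    ring
  have hLagrEq : Lagr f h g lam mu = fun x => Lagr f h g lam' mu' x + Φ x := funext hdecomp
  -- the derivative of Φ
  have hDΦ : ∀ x, HasFDerivAt Φ (∑ i, v i • fderiv ℝ (con i) x) x := by
    intro x
    exact HasFDerivAt.fun_sum fun i _ =>
      (((hcon i).differentiable two_ne_zero x).hasFDerivAt).const_mul (v i)
  have hfΦ : ∀ x, fderiv ℝ Φ x = ∑ i, v i • fderiv ℝ (con i) x := fun x => (hDΦ x).fderiv
  have hΦ0 : fderiv ℝ Φ xs = 0 := by
    have hL : fderiv ℝ (Lagr f h g lam mu) xs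
        = fderiv ℝ (Lagr f h g lam' mu') xs + fderiv ℝ Φ xs := by
      rw [hLagrEq]
      exact fderiv_add ((hLagrCD lam' mu').differentiable two_ne_zero xs)
        (hΦ.differentiable two_ne_zero xs)
    rw [hLM.2.1, hLM'.2.1, zero_add] at hL
    exact hL.symm
  -- Jacobian entries are gradients of the constraint functions
  have hJentry : ∀ (x : Fin n → ℝ) (i : Fin m ⊕ {j : Fin p // g j xs = 0}) (k : Fin n),
      Jac h g xs x i k = fderiv ℝ (con i) x (Pi.single k 1) := by
    intro x i k
    rcases i with i | j <;> rfl
  have hJdot : ∀ (x : Fin n → ℝ) (w : Fin n → ℝ),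
      v ⬝ᵥ (Jac h g xs x *ᵥ w) = fderiv ℝ Φ x w := by
    intro x w
    rw [hfΦ x]
    rw [ContinuousLinearMap.sum_apply]
    simp only [ContinuousLinearMap.coe_smul', Pi.smul_apply, smul_eq_mul]
    simp only [dotProduct, Matrix.mulVec]
    refine Finset.sum_congr rfl fun i _ => ?_
    congr 1
    rw [clm_apply_eq_sum (fderiv ℝ (con i) x) w]
    exact Finset.sum_congr rfl fun k _ => by rw [hJentry]
  -- the matrix family along the line through xs in direction d
  set M : ℝ → Matrix (Fin m ⊕ {j : Fin p // g j xs = 0}) (Fin n) ℝ :=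
    fun t => Jac h g xs (xs + t • d) with hMdef
  have hM0 : M 0 = Jac h g xs xs := by
    show Jac h g xs (xs + (0:ℝ) • d) = Jac h g xs xs
    rw [zero_smul, add_zero]
  have hline : ContDiff ℝ 2 (fun t : ℝ => xs + t • d) :=
    contDiff_const.add (contDiff_id.smul contDiff_const)
  have hgradCD : ∀ (i : Fin m ⊕ {j : Fin p // g j xs = 0}) (k : Fin n),
      ContDiff ℝ 1 (fun x => fderiv ℝ (con i) x (Pi.single k 1)) := by
    intro i k
    exact ((hcon i).fderiv_right (le_refl 2)).clm_apply contDiff_const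
  have hdiff : ∀ i k, DifferentiableAt ℝ (fun t => M t i k) 0 := by
    intro i k
    have he : (fun t => M t i k) = fun t =>
        fderiv ℝ (con i) (xs + t • d) (Pi.single k 1) := by
      funext t; exact hJentry _ i k
    rw [he]
    exact (((hgradCD i k).comp (hline.of_le one_le_two)).differentiable one_ne_zero).differentiableAt
  have hlinetendsto : Tendsto (fun t : ℝ => xs + t • d) (nhds 0) (nhds xs) := by
    have := (hline.continuous.tendsto 0)
    simp only [zero_smul, add_zero] at this
    exact this
  have hrk : ∀ᶠ t in nhds (0:ℝ), (M t).rank = (M 0).rank := by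
    rw [hM0]
    exact hlinetendsto.eventually hconst
  have hvM : v ᵥ* M 0 = 0 := by
    funext k
    have h1 : (v ᵥ* M 0) k = v ⬝ᵥ (M 0 *ᵥ Pi.single k 1) := by
      simp only [Matrix.vecMul, Matrix.mulVec, dotProduct]
      refine Finset.sum_congr rfl fun i _ => ?_
      congr 1
      simp [Pi.single_apply, mul_ite, Finset.sum_ite_eq']
    rw [h1, hM0, hJdot xs (Pi.single k 1), hΦ0]
    rfl
  have hMd : M 0 *ᵥ d = 0 := by
    funext i
    have h1 : (M 0 *ᵥ d) i = fderiv ℝ (con i) xs d := by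
      rw [hM0]
      rw [clm_apply_eq_sum (fderiv ℝ (con i) xs) d]
      simp only [Matrix.mulVec, dotProduct]
      exact Finset.sum_congr rfl fun k _ => by rw [hJentry]
    rw [h1]
    rcases i with i | j
    · exact hdS.1 i
    · exact hdS.2 j.1 j.2
  have Hcore : HasDerivAt (fun t => v ⬝ᵥ (M t *ᵥ d)) 0 0 :=
    rank_const_deriv M hdiff hrk v hvM d hMd
  -- the same derivative via the second derivative of Φ
  have hc : HasDerivAt (fun t : ℝ => xs + t • d) d 0 := by
    have h1 : HasDerivAt (fun t : ℝ => t • d) ((1:ℝ) • d) 0 :=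
      (hasDerivAt_id (0:ℝ)).smul_const d
    simpa using h1.const_add xs
  have hΦ1 : ContDiff ℝ 1 (fderiv ℝ Φ) := hΦ.fderiv_right (le_refl 2)
  have hdd : HasFDerivAt (fderiv ℝ Φ) (fderiv ℝ (fderiv ℝ Φ) xs) (xs + (0:ℝ) • d) := by
    rw [zero_smul, add_zero]
    exact ((hΦ1.differentiable one_ne_zero) xs).hasFDerivAt
  have hcomp : HasDerivAt (fun t : ℝ => fderiv ℝ Φ (xs + t • d))
      (fderiv ℝ (fderiv ℝ Φ) xs d) 0 := by
    have := hdd.comp_hasDerivAt (0:ℝ) hc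
    exact this
  have H2 : HasDerivAt (fun t : ℝ => fderiv ℝ Φ (xs + t • d) d)
      (fderiv ℝ (fderiv ℝ Φ) xs d d) 0 := by
    have := hcomp.clm_apply (hasDerivAt_const (0:ℝ) d)
    simpa using this
  have hfuneq : (fun t => v ⬝ᵥ (M t *ᵥ d)) = fun t : ℝ => fderiv ℝ Φ (xs + t • d) d := by
    funext t
    exact hJdot _ d
  have hzero : fderiv ℝ (fderiv ℝ Φ) xs d d = 0 := by
    rw [hfuneq] at Hcore
    exact H2.unique Hcore
  have hhessΦ : hessQ Φ xs d = 0 := by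
    rw [hessQ, iteratedFDeriv_two_apply]
    simpa using hzero
  -- assemble via additivity of the second derivative
  have hsplit : hessQ (Lagr f h g lam mu) xs d
      = hessQ (Lagr f h g lam' mu') xs d + hessQ Φ xs d := by
    rw [hessQ, hessQ, hessQ, hLagrEq]
    have heq : (fun x => Lagr f h g lam' mu' x + Φ x) = Lagr f h g lam' mu' + Φ := rfl
    rw [heq, iteratedFDeriv_add_apply (by exact_mod_cast (hLagrCD lam' mu').contDiffAt)
      (by exact_mod_cast hΦ.contDiffAt)]
    rfl
  rw [hsplit, hhessΦ, add_zero]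

end
end

section
/- Consider in ℝ³ the problem: minimize x₃ subject to g₁(x) := 2√3 x₁x₂ − 2x₂² − x₃ ≤ 0, g₂(x) := x₂² − 3x₁² − x₃ ≤ 0, g₃(x) := −2√3 x₁x₂ − 2x₂² − x₃ ≤ 0. Then x* = (0,0,0) is a global minimizer at which MFCQ holds, the critical subspace is S(x*) = {d ∈ ℝ³ : d₃ = 0}, the set of Lagrange multipliers is Λ(x*) = {μ ∈ ℝ³₊ : μ₁ + μ₂ + μ₃ = 1}, and WSOC fails for every multiplier: for every μ ∈ Λ(x*) there exists d ∈ S(x*) with dᵀ∇²ₓₓL(x*,μ)d < 0. -/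
open scoped BigOperators
open Matrix

attribute [local instance] Classical.propDecidable

noncomputable section

/-- Feasibility for an inequality-constrained problem. -/
def FeasI {n p : ℕ} (g : Fin p → (Fin n → ℝ) → ℝ) (x : Fin n → ℝ) : Prop :=
  ∀ j, g j x ≤ 0

/-- The Lagrangian of an inequality-constrained problem. -/
def LagrI {n p : ℕ} (f : (Fin n → ℝ) → ℝ) (g : Fin p → (Fin n → ℝ) → ℝ)
    (mu : Fin p → ℝ) (x : Fin n → ℝ) : ℝ :=
  f x + ∑ j, mu j * g j x

/-- `mu` is a Lagrange multiplier at `xs`, i.e. `mu ∈ Λ(xs)`. -/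
def IsLagMultI {n p : ℕ} (f : (Fin n → ℝ) → ℝ) (g : Fin p → (Fin n → ℝ) → ℝ)
    (xs : Fin n → ℝ) (mu : Fin p → ℝ) : Prop :=
  (∀ j, 0 ≤ mu j) ∧ fderiv ℝ (LagrI f g mu) xs = 0 ∧ ∀ j, mu j * g j xs = 0

/-- MFCQ for an inequality-constrained problem. -/
def MFCQI {n p : ℕ} (g : Fin p → (Fin n → ℝ) → ℝ) (xs : Fin n → ℝ) : Prop :=
  ∃ d : Fin n → ℝ, ∀ j, g j xs = 0 → fderiv ℝ (g j) xs d < 0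

/-- Membership in the critical subspace `S(xs)`. -/
def critSubI {n p : ℕ} (g : Fin p → (Fin n → ℝ) → ℝ) (xs d : Fin n → ℝ) : Prop :=
  ∀ j, g j xs = 0 → fderiv ℝ (g j) xs d = 0

/-- Objective of the Arutyunov/Anitescu-type example. -/
def f13 : (Fin 3 → ℝ) → ℝ := fun x => x 2

/-- Constraints of the Arutyunov/Anitescu-type example. -/
def g13 : Fin 3 → (Fin 3 → ℝ) → ℝ :=
  ![fun x => 2 * Real.sqrt 3 * x 0 * x 1 - 2 * (x 1) ^ 2 - x 2,
    fun x => (x 1) ^ 2 - 3 * (x 0) ^ 2 - x 2,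
    fun x => -(2 * Real.sqrt 3) * x 0 * x 1 - 2 * (x 1) ^ 2 - x 2]

namespace Stmt13Aux

def P (i : Fin 3) : (Fin 3 → ℝ) →L[ℝ] ℝ := ContinuousLinearMap.proj i

@[simp] lemma P_apply (i : Fin 3) (x : Fin 3 → ℝ) : P i x = x i := rfl

/-- template polynomial -/
def tpl (α β γ δ : ℝ) : (Fin 3 → ℝ) → ℝ :=
  fun x => α * (x 0 * x 1) + β * (x 1 * x 1) + γ * (x 0 * x 0) + δ * x 2

/-- linear part of derivative -/
def M (α β γ : ℝ) : (Fin 3 → ℝ) →L[ℝ] ((Fin 3 → ℝ) →L[ℝ] ℝ) :=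
  ((α • P 1 + (2*γ) • P 0).smulRight (P 0)) + ((α • P 0 + (2*β) • P 1).smulRight (P 1))

lemma M_apply (α β γ : ℝ) (y d : Fin 3 → ℝ) :
    M α β γ y d = (α * y 1 + 2*γ*y 0) * d 0 + (α * y 0 + 2*β*y 1) * d 1 := by
  simp [M, ContinuousLinearMap.smulRight_apply]

lemma tpl_hasFDerivAt (α β γ δ : ℝ) (y : Fin 3 → ℝ) :
    HasFDerivAt (tpl α β γ δ) (M α β γ y + δ • P 2) y := by
  have h0 : HasFDerivAt (fun x : Fin 3 → ℝ => x 0) (P 0) y := (P 0).hasFDerivAt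
  have h1 : HasFDerivAt (fun x : Fin 3 → ℝ => x 1) (P 1) y := (P 1).hasFDerivAt
  have h2 : HasFDerivAt (fun x : Fin 3 → ℝ => x 2) (P 2) y := (P 2).hasFDerivAt
  have := ((((h0.mul h1).const_mul α).add ((h1.mul h1).const_mul β)).add
      ((h0.mul h0).const_mul γ)).add (h2.const_mul δ)
  refine HasFDerivAt.congr_fderiv this ?_
  ext d
  simp [M_apply, ContinuousLinearMap.smulRight_apply]
  ring

lemma tpl_fderiv (α β γ δ : ℝ) :
    fderiv ℝ (tpl α β γ δ) = fun y => M α β γ y + δ • P 2 := by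
  funext y; exact (tpl_hasFDerivAt α β γ δ y).fderiv

lemma tpl_fderiv_zero_apply (α β γ δ : ℝ) (d : Fin 3 → ℝ) :
    fderiv ℝ (tpl α β γ δ) 0 d = δ * d 2 := by
  rw [tpl_fderiv]
  simp [M_apply]

lemma tpl_hess (α β γ δ : ℝ) (d : Fin 3 → ℝ) :
    iteratedFDeriv ℝ 2 (tpl α β γ δ) 0 ![d, d]
      = 2*α*(d 0 * d 1) + 2*β*(d 1 * d 1) + 2*γ*(d 0 * d 0) := by
  rw [iteratedFDeriv_two_apply, tpl_fderiv]
  have : fderiv ℝ (fun y => M α β γ y + δ • P 2) 0 = M α β γ :=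
    ((M α β γ).hasFDerivAt.add_const (δ • P 2)).fderiv
  rw [this]
  show M α β γ d d = _
  rw [M_apply]; ring

lemma g13_eq_tpl (j : Fin 3) :
    g13 j = tpl (![2 * Real.sqrt 3, 0, -(2 * Real.sqrt 3)] j)
      (![-2, 1, -2] j) (![0, -3, 0] j) (-1) := by
  fin_cases j <;> (funext x; simp [g13, tpl]; ring)

lemma g13_zero (j : Fin 3) : g13 j 0 = 0 := by
  fin_cases j <;> simp [g13, Matrix.vecHead, Matrix.vecTail]

lemma delta_eq_zero {α β γ δ : ℝ} (h : fderiv ℝ (tpl α β γ δ) 0 = 0) : δ = 0 := by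
  have h2 := congrFun (congrArg DFunLike.coe h) ![0, 0, 1]
  rw [tpl_fderiv_zero_apply] at h2
  simpa using h2

lemma fderiv_g13 (j : Fin 3) (d : Fin 3 → ℝ) :
    fderiv ℝ (g13 j) 0 d = -(d 2) := by
  rw [g13_eq_tpl j, tpl_fderiv_zero_apply]; ring

lemma lagr_eq_tpl (mu : Fin 3 → ℝ) :
    LagrI f13 g13 mu = tpl (2 * Real.sqrt 3 * (mu 0 - mu 2))
      (mu 1 - 2 * mu 0 - 2 * mu 2) (-3 * mu 1) (1 - (mu 0 + mu 1 + mu 2)) := by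
  funext x
  simp [LagrI, f13, g13, Fin.sum_univ_three, tpl]
  ring

end Stmt13Aux

open Stmt13Aux

/-- in the modified Baccari example, the origin is a global minimizer where
MFCQ holds, `S(x*)` is the plane `d₃ = 0`, `Λ(x*)` is the unit simplex, and WSOC fails for
every Lagrange multiplier. -/
theorem stmt13 :
    (FeasI g13 (0 : Fin 3 → ℝ) ∧ ∀ x, FeasI g13 x → f13 (0 : Fin 3 → ℝ) ≤ f13 x) ∧
    MFCQI g13 (0 : Fin 3 → ℝ) ∧
    ({d : Fin 3 → ℝ | critSubI g13 (0 : Fin 3 → ℝ) d} = {d : Fin 3 → ℝ | d 2 = 0}) ∧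
    (∀ mu : Fin 3 → ℝ, IsLagMultI f13 g13 (0 : Fin 3 → ℝ) mu ↔
      ((∀ j, 0 ≤ mu j) ∧ mu 0 + mu 1 + mu 2 = 1)) ∧
    (∀ mu : Fin 3 → ℝ, IsLagMultI f13 g13 (0 : Fin 3 → ℝ) mu →
      ∃ d : Fin 3 → ℝ, critSubI g13 (0 : Fin 3 → ℝ) d ∧
        hessQ (LagrI f13 g13 mu) (0 : Fin 3 → ℝ) d < 0) := by
  have hs : Real.sqrt 3 ^ 2 = 3 := Real.sq_sqrt (by norm_num)
  have hs0 : (0:ℝ) ≤ Real.sqrt 3 := Real.sqrt_nonneg 3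
  refine ⟨⟨fun j => le_of_eq (g13_zero j), ?_⟩, ?_, ?_, ?_, ?_⟩
  · -- global minimizer
    intro x hx
    have h0 := hx 0; have h1 := hx 1; have h2 := hx 2
    simp only [g13, Matrix.cons_val_zero, Matrix.cons_val_one, Matrix.head_cons,
      Matrix.cons_val_two, Matrix.tail_cons] at h0 h1 h2
    show (0 : Fin 3 → ℝ) 2 ≤ x 2
    have : (0 : Fin 3 → ℝ) 2 = 0 := rfl
    rw [this]
    set s := Real.sqrt 3 with hsdef
    have hu : 0 ≤ 2 * (x 1)^2 + x 2 - 2 * s * (x 0 * x 1) := by nlinarith [h0]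
    have hv : 0 ≤ 2 * (x 1)^2 + x 2 + 2 * s * (x 0 * x 1) := by nlinarith [h2]
    have hw : 0 ≤ 3 * (x 0)^2 + x 2 - (x 1)^2 := by linarith
    have huv : 0 ≤ (2 * (x 1)^2 + x 2)^2 - 12 * (x 0 * x 1)^2 := by
      nlinarith [mul_nonneg hu hv, hs, sq_nonneg (x 0 * x 1)]
    nlinarith [huv, mul_nonneg hw (sq_nonneg (x 1)), hu, hv, sq_nonneg (x 1)]
  · -- MFCQ
    refine ⟨![0, 0, 1], fun j _ => ?_⟩
    rw [fderiv_g13]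
    norm_num
    exact (zero_lt_one : (0:ℝ) < 1)
  · -- critical subspace
    ext d
    simp only [Set.mem_setOf_eq]
    constructor
    · intro h
      have := h 0 (g13_zero 0)
      rw [fderiv_g13] at this
      linarith
    · intro h j _
      rw [fderiv_g13, h, neg_zero]
  · -- multiplier set
    intro mu
    constructor
    · rintro ⟨hnn, hgrad, -⟩
      refine ⟨hnn, ?_⟩
      rw [lagr_eq_tpl] at hgrad
      have := delta_eq_zero hgrad
      linarith
    · rintro ⟨hnn, hsum⟩
      refine ⟨hnn, ?_, fun j => by rw [g13_zero, mul_zero]⟩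
      rw [lagr_eq_tpl]
      ext d
      rw [tpl_fderiv_zero_apply]
      have hδ : 1 - (mu 0 + mu 1 + mu 2) = (0:ℝ) := by rw [hsum]; ring
      rw [hδ, zero_mul]
      simp
  · -- WSOC fails
    rintro mu ⟨hnn, hgrad, -⟩
    have hsum : mu 0 + mu 1 + mu 2 = 1 := by
      rw [lagr_eq_tpl] at hgrad
      have := delta_eq_zero hgrad
      linarith
    have hcrit : ∀ d : Fin 3 → ℝ, d 2 = 0 → critSubI g13 (0 : Fin 3 → ℝ) d := by
      intro d hd j _
      rw [fderiv_g13, hd, neg_zero]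
    by_cases h1 : mu 1 > 0
    · refine ⟨![1, 0, 0], hcrit _ rfl, ?_⟩
      rw [hessQ, lagr_eq_tpl, tpl_hess]
      norm_num
      linarith
    · push_neg at h1
      have h1' : mu 1 = 0 := le_antisymm h1 (hnn 1)
      refine ⟨![0, 1, 0], hcrit _ rfl, ?_⟩
      rw [hessQ, lagr_eq_tpl, tpl_hess]
      norm_num
      have h02 : mu 0 + mu 2 = 1 := by linarith
      nlinarith [hnn 0, hnn 2]
end
end
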